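/- arXiv:1105.6047 — 2 statements merged into one kernel-verified Lean document; each statement's English description precedes it below -/
import Mathlib

section
/- The rate function J^∞(φ) = sup_d I_d(p_d(φ)) diverges whenever φ ∉ Γ*. For φ ∈ Γ*, the limit lim_{d→∞} L_d(p_d(φ(t))) exists for almost every t ∈ [0,1] (the term in the limit being nondecreasing in d), and J^∞(φ) = ∫_0^1 lim_{d→∞} L_d(p_d(φ(t))) dt. -/
open MeasureTheory Real Set Filter Topology
open scoped ENNReal

noncomputable section

attribute [local instance] Classical.propDecidable

/-! ## Basic setting -/

abbrev I01 : Set ℝ := Set.Icc (0:ℝ) 1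

def pt0 : I01 := ⟨0, Set.left_mem_Icc.mpr zero_le_one⟩

/-- Piecewise continuity on `[0,1]`: continuity off finitely many points. -/
def PiecewiseContinuousOn01 (f : ℝ → ℝ) : Prop :=
  ∃ D : Finset ℝ, ∀ t ∈ Set.Icc (0:ℝ) 1, t ∉ D → ContinuousWithinAt f (Set.Icc (0:ℝ) 1) t

/-- Piecewise continuity on `[0,∞)`. -/
def PiecewiseContinuousOnIci (f : ℝ → ℝ) : Prop :=
  ∃ D : Set ℝ, (∀ T > (0:ℝ), (D ∩ Set.Icc 0 T).Finite) ∧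
    ∀ t ∈ Set.Ici (0:ℝ), t ∉ D → ContinuousWithinAt f (Set.Ici (0:ℝ)) t

/-- Assumption (ND) on the time-dependent parameters `p, β`. -/
structure ND (p β : ℝ → ℝ) (p0 β0 β1 : ℝ) : Prop where
  p_nonneg : ∀ t ∈ Set.Icc (0:ℝ) 1, 0 ≤ p t
  p_le : ∀ t ∈ Set.Icc (0:ℝ) 1, p t ≤ p0
  p0_lt_one : p0 < 1
  β_lb : ∀ t ∈ Set.Icc (0:ℝ) 1, β0 ≤ β t
  β_ub : ∀ t ∈ Set.Icc (0:ℝ) 1, β t ≤ β1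
  β0_pos : 0 < β0
  p_pc : PiecewiseContinuousOn01 p
  β_pc : PiecewiseContinuousOn01 β

/-- Assumption (ND), extended to `[0,∞)`. -/
structure NDIci (p β : ℝ → ℝ) (p0 β0 β1 : ℝ) : Prop where
  p_nonneg : ∀ t ∈ Set.Ici (0:ℝ), 0 ≤ p t
  p_le : ∀ t ∈ Set.Ici (0:ℝ), p t ≤ p0
  p0_lt_one : p0 < 1
  β_lb : ∀ t ∈ Set.Ici (0:ℝ), β0 ≤ β t
  β_ub : ∀ t ∈ Set.Ici (0:ℝ), β t ≤ β1
  β0_pos : 0 < β0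
  p_pc : PiecewiseContinuousOnIci p
  β_pc : PiecewiseContinuousOnIci β

/-- The limiting initial data `(c_i)`, `c = Σ_i c_i`, `c̃ = Σ_i i c_i` of assumption (LIM). -/
structure LIMc (c : ℕ → ℝ) (cc ctil : ℝ) : Prop where
  nonneg : ∀ i, 0 ≤ c i
  summable : Summable c
  cc_eq : cc = ∑' i, c i
  mul_summable : Summable (fun i : ℕ => (i : ℝ) * c i)
  ctil_eq : ctil = ∑' i : ℕ, (i : ℝ) * c i

/-- Assumption (LIM) for the array of initial urn configurations `init n i = Z_i^n(0)`. -/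
structure LIM (init : ℕ → ℕ → ℕ) (c : ℕ → ℝ) (cc ctil : ℝ) : Prop where
  c_lim : ∀ i, Tendsto (fun n : ℕ => (init n i : ℝ) / n) atTop (𝓝 (c i))
  ctil_lim : Tendsto (fun n : ℕ => ∑' i : ℕ, (i : ℝ) * (init n i : ℝ) / n) atTop (𝓝 ctil)
  ctil_eq : ctil = ∑' i : ℕ, (i : ℝ) * c i
  mul_summable : Summable (fun i : ℕ => (i : ℝ) * c i)
  c_summable : Summable c
  cc_eq : cc = ∑' i, c i
  finite_support : ∀ n, ∃ K, ∀ k, K ≤ k → init n k = 0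

/-- The total-weight normalization `σ(t) = (1+β(t))t + c̃ + cβ(t)`. -/
def sigf (β : ℝ → ℝ) (cc ctil t : ℝ) : ℝ := (1 + β t) * t + ctil + cc * β t

/-- The truncated initial vector `c^d = (c_0, …, c_d, Σ_{i>d} c_i)`. -/
def cvec (d : ℕ) (c : ℕ → ℝ) : Fin (d+2) → ℝ :=
  fun i => if (i : ℕ) ≤ d then c i else ∑' k : ℕ, c (k + (d+1))

/-- View a vector in `ℝ^{d+2}` as an `ℕ`-indexed sequence (zero for large indices). -/
def toN {d : ℕ} (g : Fin (d+2) → ℝ) : ℕ → ℝ := fun i => if h : i < d+2 then g ⟨i, h⟩ else 0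

/-- `ℕ`-indexed version of `c^d`. -/
def cvecN (d : ℕ) (c : ℕ → ℝ) : ℕ → ℝ := toN (cvec d c)

/-- Extension of a path on `[0,1]` to all of `ℝ` (constant outside `[0,1]`). -/
def pext {d : ℕ} (φ : C(I01, Fin (d+2) → ℝ)) : ℝ → Fin (d+2) → ℝ :=
  fun t => φ (Set.projIcc 0 1 zero_le_one t)

/-- Coordinatewise derivative of a path. -/
def pderivC {d : ℕ} (φ : C(I01, Fin (d+2) → ℝ)) (t : ℝ) (i : Fin (d+2)) : ℝ :=
  deriv (fun s => pext φ s i) t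

def xofN {d : ℕ} (φ : C(I01, Fin (d+2) → ℝ)) (t : ℝ) : ℕ → ℝ := toN (pext φ t)

def vofN {d : ℕ} (φ : C(I01, Fin (d+2) → ℝ)) (t : ℝ) : ℕ → ℝ := toN (fun i => pderivC φ t i)

/-! ## The rate function integrand, with the conventions `0·log 0 = 0/0 = 0`, `1/0 = ∞` -/

/-- `a log(a/b)` as an extended real, with the conventions `0 log 0 = 0·(0/0) = 0` and
`a log(a/0) = ∞` for `a ≠ 0`. -/
def entTerm (a b : ℝ) : EReal :=
  if a = 0 then (0 : EReal) else if b ≤ 0 then (⊤ : EReal)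
  else ((a * Real.log (a / b) : ℝ) : EReal)

/-- `1 - [v]_i`, the numerator attached to the increment `f_i`. -/
def numA (v : ℕ → ℝ) (i : ℕ) : ℝ := 1 - ∑ l ∈ Finset.range (i+1), v l

/-- `1 - Σ_{i=0}^d (1-[v]_i)`, the numerator attached to the increment `f_{d+1}`. -/
def numALast (v : ℕ → ℝ) (d : ℕ) : ℝ := 1 - ∑ i ∈ Finset.range (d+1), numA v i

/-- The natural increment probabilities `u_i`, `0 ≤ i ≤ d`. -/
def denB (p β : ℝ → ℝ) (cc ctil : ℝ) (t : ℝ) (x : ℕ → ℝ) (i : ℕ) : ℝ :=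
  if i = 0 then p t + (1 - p t) * (β t * x 0 / sigf β cc ctil t)
  else (1 - p t) * (((i : ℝ) + β t) * x i / sigf β cc ctil t)

/-- The natural increment probability `u_{d+1}`. -/
def denBLast (p β : ℝ → ℝ) (cc ctil : ℝ) (t : ℝ) (x : ℕ → ℝ) (d : ℕ) : ℝ :=
  (1 - p t) * (1 - (∑ i ∈ Finset.range (d+1), ((i : ℝ) + β t) * x i) / sigf β cc ctil t)

/-- The relative-entropy integrand `L_d(t, x, ẋ)` of the rate function `I_d`. -/
def LdE (p β : ℝ → ℝ) (cc ctil : ℝ) (d : ℕ) (t : ℝ) (x v : ℕ → ℝ) : EReal :=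
  (∑ i ∈ Finset.range (d+1), entTerm (numA v i) (denB p β cc ctil t x i))
    + entTerm (numALast v d) (denBLast p β cc ctil t x d)

/-- The set `Γ_d` of admissible paths. -/
def Gamma (d : ℕ) (c : ℕ → ℝ) : Set (C(I01, Fin (d+2) → ℝ)) :=
  {φ | (∀ i, φ pt0 i = cvec d c i)
    ∧ (∀ (t : I01) (i : Fin (d+2)), 0 ≤ φ t i)
    ∧ (∀ i : Fin (d+2), LipschitzWith 1 (fun t : ℝ => pext φ t i))
    ∧ (∀ᵐ t ∂(volume.restrict (Set.Icc (0:ℝ) 1)),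
        (∀ i ≤ d, 0 ≤ ∑ l ∈ Finset.range (i+1), vofN φ t l
            ∧ ∑ l ∈ Finset.range (i+1), vofN φ t l ≤ 1)
        ∧ (∑ i ∈ Finset.range (d+2), vofN φ t i = 1)
        ∧ (∑ i ∈ Finset.range (d+2), (i : ℝ) * vofN φ t i
            = ∑ i ∈ Finset.range (d+1), numA (vofN φ t) i)
        ∧ ∑ i ∈ Finset.range (d+1), numA (vofN φ t) i ≤ 1)}

/-- Extended reals to `[0,∞]`, sending `⊤` to `⊤` and negatives to `0`. -/
def erealToENNReal (x : EReal) : ℝ≥0∞ := if x = ⊤ then ⊤ else ENNReal.ofReal x.toReal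

/-- The finite-dimensional rate function `I_d`. -/
def Irate (p β : ℝ → ℝ) (c : ℕ → ℝ) (cc ctil : ℝ) (d : ℕ)
    (φ : C(I01, Fin (d+2) → ℝ)) : ℝ≥0∞ :=
  if φ ∈ Gamma d c then
    ∫⁻ t in Set.Icc (0:ℝ) 1, erealToENNReal (LdE p β cc ctil d t (xofN φ t) (vofN φ t))
  else ⊤

/-- The large deviation principle with rate `n` and good rate function `I`:
compact level sets, upper bound over closed sets, lower bound over open sets. -/
def IsLDP {Ω : Type*} [MeasurableSpace Ω] {Y : Type*} [TopologicalSpace Y]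
    (μ : Measure Ω) (Xn : ℕ → Ω → Y) (I : Y → ℝ≥0∞) : Prop :=
  (∀ M : ℝ≥0∞, M ≠ ⊤ → IsCompact {x | I x ≤ M})
  ∧ (∀ F : Set Y, IsClosed F →
      Filter.limsup (fun n : ℕ => ((Real.log ((μ ((Xn n) ⁻¹' F)).toReal) / n : ℝ) : EReal))
          Filter.atTop ≤ -((⨅ x ∈ F, I x : ℝ≥0∞) : EReal))
  ∧ (∀ G : Set Y, IsOpen G →
      -((⨅ x ∈ G, I x : ℝ≥0∞) : EReal)
        ≤ Filter.liminf (fun n : ℕ => ((Real.log ((μ ((Xn n) ⁻¹' G)).toReal) / n : ℝ) : EReal))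
            Filter.atTop)

/-- Convexity of an `[0,∞]`-valued rate function. -/
def ConvexRate {Y : Type*} [AddCommMonoid Y] [Module ℝ Y] (I : Y → ℝ≥0∞) : Prop :=
  ∀ x y : Y, ∀ a b : ℝ, 0 ≤ a → 0 ≤ b → a + b = 1 →
    I (a • x + b • y) ≤ ENNReal.ofReal a * I x + ENNReal.ofReal b * I y

/-- The `L¹` norm on `ℝ^{d+2}`. -/
def l1norm {d : ℕ} (v : Fin (d+2) → ℝ) : ℝ := ∑ i, |v i|

/-! ## The time-dependent preferential attachment urn process -/

/-- Effect of the increment `f_i` on an urn configuration `z` (`z k` = number of urns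
with exactly `k` balls): for `i = 0` a ball enters an urn of size `0` (or the new urn);
for `i ≥ 1` a new empty urn is created and an urn of size `i` becomes one of size `i+1`. -/
def applyF (i : ℕ) (z : ℕ → ℕ) : ℕ → ℕ :=
  if i = 0 then Function.update z 1 (z 1 + 1)
  else fun k => if k = 0 then z 0 + 1 else if k = i then z i - 1
    else if k = i + 1 then z (i+1) + 1 else z k

/-- Total weight `Σ_k (k + β) z_k` of a configuration. -/
def urnWeight (βv : ℝ) (z : ℕ → ℕ) : ℝ := ∑' k : ℕ, ((k : ℝ) + βv) * (z k : ℝ)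

/-- One-step transition probability of the urn scheme from `z` to `z'`. -/
def stepProb (pv βv : ℝ) (z z' : ℕ → ℕ) : ℝ :=
  ∑' i : ℕ,
    if z' = applyF i z then
      (if i = 0 then pv + (1 - pv) * (βv * (z 0 : ℝ) / urnWeight βv z)
       else (1 - pv) * (((i : ℝ) + βv) * (z i : ℝ) / urnWeight βv z))
    else 0

/-- `Z n j ω k` is the number of urns with `k` balls at step `j` in the `n`-th row; the law
of each row is that of the time-dependent preferential attachment urn Markov chain. -/
def UrnLaw {Ω : Type*} [MeasurableSpace Ω] (μ : Measure Ω) (p β : ℝ → ℝ)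
    (init : ℕ → ℕ → ℕ) (Z : ℕ → ℕ → Ω → ℕ → ℕ) : Prop :=
  (∀ n ω, Z n 0 ω = init n) ∧
  ∀ n : ℕ, 1 ≤ n → ∀ traj : ℕ → ℕ → ℕ, traj 0 = init n →
    μ {ω | ∀ j ≤ n, Z n j ω = traj j}
      = ENNReal.ofReal (∏ j ∈ Finset.range n,
          stepProb (p ((j : ℝ) / n)) (β ((j : ℝ) / n)) (traj j) (traj (j+1)))

/-- Truncated degree vector `(Z_0, …, Z_d, Z̄_{d+1})` of a configuration. -/
def Ztrunc (d : ℕ) (z : ℕ → ℕ) : Fin (d+2) → ℝ :=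
  fun i => if (i : ℕ) ≤ d then (z i : ℝ) else ∑' k : ℕ, (z (k + (d+1)) : ℝ)

/-- `X n` is the path `X^{n,d}`, the linear interpolation of `(1/n) Z^{n,d}(⌊nt⌋)`. -/
def InterpD {Ω : Type*} (d : ℕ) (Z : ℕ → ℕ → Ω → ℕ → ℕ)
    (X : ℕ → Ω → C(I01, Fin (d+2) → ℝ)) : Prop :=
  ∀ n : ℕ, 1 ≤ n → ∀ ω (t : I01) (i : Fin (d+2)),
    X n ω t i
      = (1 - ((n : ℝ) * (t : ℝ) - (⌊(n : ℝ) * (t : ℝ)⌋₊ : ℝ)))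
          * Ztrunc d (Z n ⌊(n : ℝ) * (t : ℝ)⌋₊ ω) i / n
        + ((n : ℝ) * (t : ℝ) - (⌊(n : ℝ) * (t : ℝ)⌋₊ : ℝ))
          * Ztrunc d (Z n (⌊(n : ℝ) * (t : ℝ)⌋₊ + 1) ω) i / n

/-- `X n` is the path `X^{n,∞}`, the linear interpolation of `(1/n) Z^{n,∞}(⌊nt⌋)`. -/
def InterpInf {Ω : Type*} (Z : ℕ → ℕ → Ω → ℕ → ℕ)
    (X : ℕ → Ω → ∀ _ : ℕ, C(I01, ℝ)) : Prop :=
  ∀ n : ℕ, 1 ≤ n → ∀ ω (i : ℕ) (t : I01),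
    X n ω i t
      = (1 - ((n : ℝ) * (t : ℝ) - (⌊(n : ℝ) * (t : ℝ)⌋₊ : ℝ)))
          * (Z n ⌊(n : ℝ) * (t : ℝ)⌋₊ ω i : ℝ) / n
        + ((n : ℝ) * (t : ℝ) - (⌊(n : ℝ) * (t : ℝ)⌋₊ : ℝ))
          * (Z n (⌊(n : ℝ) * (t : ℝ)⌋₊ + 1) ω i : ℝ) / n

/-! ## The infinite-dimensional rate function -/

def extOne (f : C(I01, ℝ)) : ℝ → ℝ := fun t => f (Set.projIcc 0 1 zero_le_one t)

def xofInf (ξ : ∀ _ : ℕ, C(I01, ℝ)) (t : ℝ) : ℕ → ℝ := fun i => extOne (ξ i) t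

def vofInf (ξ : ∀ _ : ℕ, C(I01, ℝ)) (t : ℝ) : ℕ → ℝ := fun i => deriv (extOne (ξ i)) t

/-- The set `Γ^∞` of admissible infinite-dimensional paths. -/
def GammaInf (c : ℕ → ℝ) : Set (∀ _ : ℕ, C(I01, ℝ)) :=
  {ξ | (∀ i, ξ i pt0 = c i)
    ∧ (∀ i (t : I01), 0 ≤ ξ i t)
    ∧ (∀ i, LipschitzWith 1 (extOne (ξ i)))
    ∧ (∀ t : I01, Summable (fun i => ξ i t))
    ∧ (∀ᵐ t ∂(volume.restrict (Set.Icc (0:ℝ) 1)),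
        (∀ i : ℕ, 0 ≤ ∑ l ∈ Finset.range (i+1), vofInf ξ t l
            ∧ ∑ l ∈ Finset.range (i+1), vofInf ξ t l ≤ 1)
        ∧ HasDerivAt (fun s : ℝ => ∑' i, extOne (ξ i) s) 1 t
        ∧ Summable (fun i => numA (vofInf ξ t) i)
        ∧ ∑' i, numA (vofInf ξ t) i ≤ 1)}

/-- The infinite-dimensional rate function `I^∞`. -/
def IrateInf (p β : ℝ → ℝ) (c : ℕ → ℝ) (cc ctil : ℝ) (ξ : ∀ _ : ℕ, C(I01, ℝ)) : ℝ≥0∞ :=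
  if ξ ∈ GammaInf c then
    ∫⁻ t in Set.Icc (0:ℝ) 1,
      ⨆ d : ℕ, erealToENNReal (LdE p β cc ctil d t (xofInf ξ t) (vofInf ξ t))
  else ⊤

/-! ## Projective limit setting -/

/-- The truncation `p_{ij} : ℝ^{j+2} → ℝ^{i+2}`, `(x_0,…,x_{j+1}) ↦ (x_0,…,x_i, Σ_{l>i} x_l)`. -/
def truncMap (i j : ℕ) (_hij : i ≤ j) : (Fin (j+2) → ℝ) → (Fin (i+2) → ℝ) :=
  fun x k =>
    if (k : ℕ) ≤ i then x (Fin.castLE (by omega) k)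
    else ∑ l : Fin (j+2), if i + 1 ≤ (l : ℕ) then x l else 0

lemma truncMap_continuous (i j : ℕ) (hij : i ≤ j) : Continuous (truncMap i j hij) := by
  apply continuous_pi
  intro k
  show Continuous fun x : Fin (j+2) → ℝ => truncMap i j hij x k
  by_cases h : (k : ℕ) ≤ i
  · simp only [truncMap, if_pos h]
    exact continuous_apply _
  · simp only [truncMap, if_neg h]
    apply continuous_finset_sum
    intro l _
    by_cases hl : i + 1 ≤ (l : ℕ)
    · simp only [if_pos hl]; exact continuous_apply _
    · simp only [if_neg hl]; exact continuous_const

/-- The projection `p_{ij} : 𝒴_j → 𝒴_i` on path spaces. -/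
def projMapC (i j : ℕ) (hij : i ≤ j) (φ : C(I01, Fin (j+2) → ℝ)) : C(I01, Fin (i+2) → ℝ) :=
  ⟨fun t => truncMap i j hij (φ t), (truncMap_continuous i j hij).comp φ.continuous⟩

/-- The projective limit `lim← 𝒴_j ⊆ Π_j 𝒴_j`. -/
def ProjLim : Set (∀ j : ℕ, C(I01, Fin (j+2) → ℝ)) :=
  {x | ∀ (i j : ℕ) (hij : i ≤ j), projMapC i j hij (x j) = x i}

/-- `Γ* ⊆ lim← 𝒴_j`: compatible families with all coordinates admissible. -/
def GammaStar (c : ℕ → ℝ) : Set (∀ j : ℕ, C(I01, Fin (j+2) → ℝ)) :=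
  {x | x ∈ ProjLim ∧ ∀ d, x d ∈ Gamma d c}

/-- The projective-limit rate function `J^∞(φ) = sup_d I_d(p_d φ)`. -/
def Jinf (p β : ℝ → ℝ) (c : ℕ → ℝ) (cc ctil : ℝ)
    (x : ∀ j : ℕ, C(I01, Fin (j+2) → ℝ)) : ℝ≥0∞ :=
  if x ∈ ProjLim then ⨆ d : ℕ, Irate p β c cc ctil d (x d) else ⊤

/-! ## Carathéodory solutions of the LLN ODE systems -/

/-- A Carathéodory solution on `[0,T]` of `ẋ = F(t,x)`, `x(0) = x₀`, in coordinates `≤ N`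
(equivalently, a solution of the associated integral equation). -/
def IsCaraSol (F : ℝ → (ℕ → ℝ) → ℕ → ℝ) (x0 : ℕ → ℝ) (N : ℕ) (T : ℝ) (f : ℝ → ℕ → ℝ) : Prop :=
  ∀ i ≤ N, IntervalIntegrable (fun s => F s (f s) i) volume 0 T ∧
    ∀ t ∈ Set.Icc (0:ℝ) T, f t i = x0 i + ∫ s in (0:ℝ)..t, F s (f s) i

/-- A Carathéodory solution on `[0,∞)`. -/
def IsCaraSolIci (F : ℝ → (ℕ → ℝ) → ℕ → ℝ) (x0 : ℕ → ℝ) (N : ℕ) (f : ℝ → ℕ → ℝ) : Prop :=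
  ∀ i ≤ N, (∀ T > (0:ℝ), IntervalIntegrable (fun s => F s (f s) i) volume 0 T) ∧
    ∀ t ∈ Set.Ici (0:ℝ), f t i = x0 i + ∫ s in (0:ℝ)..t, F s (f s) i

/-- The vector field of the LLN ODE system, coordinates `i ≥ 0`. -/
def LLNfield0 (p β : ℝ → ℝ) (cc ctil : ℝ) (t : ℝ) (x : ℕ → ℝ) : ℕ → ℝ := fun i =>
  if i = 0 then 1 - p t - (1 - p t) * (β t * x 0 / sigf β cc ctil t)
  else (if i = 1 then p t else 0)
    + (1 - p t) * ((((i : ℝ) - 1) + β t) * x (i-1) / sigf β cc ctil t)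
    - (1 - p t) * (((i : ℝ) + β t) * x i / sigf β cc ctil t)

/-- The vector field of the `d`-dimensional LLN ODE system (with the last coordinate
`φ̇_{d+1} = 1 - Σ_{i≤d} φ̇_i`). -/
def LLNfield (p β : ℝ → ℝ) (cc ctil : ℝ) (d : ℕ) (t : ℝ) (x : ℕ → ℝ) : ℕ → ℝ := fun i =>
  if i ≤ d then LLNfield0 p β cc ctil t x i
  else if i = d + 1 then 1 - ∑ l ∈ Finset.range (d+1), LLNfield0 p β cc ctil t x l
  else 0

/-- Truncation of an infinite family `ζ` to the `d`-dimensional path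
`(ζ_0, …, ζ_d, ζ̄_{d+1})` with `ζ̄_{d+1}(t) = t + c - Σ_{i≤d} ζ_i(t)`. -/
def truncSol (d : ℕ) (cc : ℝ) (ζ : ℕ → ℝ → ℝ) : ℝ → ℕ → ℝ := fun t i =>
  if i ≤ d then ζ i t
  else if i = d + 1 then t + cc - ∑ l ∈ Finset.range (d+1), ζ l t
  else 0

/-- The integrating factor `M_i(s,t) = exp[-∫_s^t (1-p(u))(i+β(u))/σ(u) du]`. -/
def Mfac (p β : ℝ → ℝ) (cc ctil : ℝ) (i : ℕ) (s t : ℝ) : ℝ :=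
  Real.exp (-(∫ u in s..t, (1 - p u) * (((i : ℝ) + β u) / sigf β cc ctil u)))

/-- The explicit solution formulas of the LLN ODE system. -/
def zetaExpl (p β : ℝ → ℝ) (cc ctil : ℝ) (c : ℕ → ℝ) : ℕ → ℝ → ℝ
  | 0 => fun t => c 0 * Mfac p β cc ctil 0 0 t
      + ∫ s in (0:ℝ)..t, (1 - p s) * Mfac p β cc ctil 0 s t
  | (i+1) => fun t => c (i+1) * Mfac p β cc ctil (i+1) 0 t
      + ∫ s in (0:ℝ)..t,
          ((if i = 0 then p s else 0)
            + (1 - p s) * (((i : ℝ) + β s) * zetaExpl p β cc ctil c i s / sigf β cc ctil s))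
          * Mfac p β cc ctil (i+1) s t

/-- The scalar field `G(t,x)` of the comparison ODE. -/
def Gfield (p β : ℝ → ℝ) (cc ctil : ℝ) (t x : ℝ) : ℝ :=
  p t + (1 - p t) * ((x + β t * (t + cc)) / sigf β cc ctil t)

/-- A scalar Carathéodory solution on `[0,∞)`. -/
def IsCaraScalIci (G : ℝ → ℝ → ℝ) (x0 : ℝ) (f : ℝ → ℝ) : Prop :=
  (∀ T > (0:ℝ), IntervalIntegrable (fun s => G s (f s)) volume 0 T) ∧
    ∀ t ∈ Set.Ici (0:ℝ), f t = x0 + ∫ s in (0:ℝ)..t, G s (f s)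

/-- The vector field of the comparison system `O(o₁,o₂,o₃,o₄,o₅)` (coordinates `0 ≤ i ≤ d`). -/
def OField (o1 o2 o3 o4 o5 : ℝ) (d : ℕ) (t : ℝ) (x : ℕ → ℝ) : ℕ → ℝ := fun i =>
  if i = 0 then 1 - o1 - (1 - o2) * (o3 / (1 + o4)) * (x 0 / (t + o5))
  else if i ≤ d then
    (if i = 1 then o1 else 0)
      + (1 - o2) / (1 + o4) * (((((i : ℝ) - 1) + o3) * x (i-1) - ((i : ℝ) + o3) * x i) / (t + o5))
  else 0

/-! ## Constructions for the lower bound -/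

/-- Convex combination `φ_θ = (1-θ)φ* + θℓ`. -/
def phiMix {d : ℕ} (θ : ℝ) (φstar ℓC : C(I01, Fin (d+2) → ℝ)) : C(I01, Fin (d+2) → ℝ) :=
  (1 - θ) • φstar + θ • ℓC

/-- Block time-average `γ_κ` of the derivative of `φ` on the `κ`-block partition of `[0,1]`
(with `γ_κ(1) = γ_κ(1 - 1/κ)`). -/
def blockAvg {d : ℕ} (φ : C(I01, Fin (d+2) → ℝ)) (κ : ℕ) (t : ℝ) (i : Fin (d+2)) : ℝ :=
  (κ : ℝ) * ∫ s in (((min ⌊t * κ⌋₊ (κ-1) : ℕ) : ℝ)/κ)..((((min ⌊t * κ⌋₊ (κ-1) : ℕ) : ℝ) + 1)/κ),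
      pderivC φ s i

/-- The regularized path `ψ_κ(t) = c^d + ∫_0^t γ_κ(s) ds`. -/
def psiKappa {d : ℕ} (φ : C(I01, Fin (d+2) → ℝ)) (κ : ℕ) (c : ℕ → ℝ) (t : ℝ)
    (i : Fin (d+2)) : ℝ :=
  cvec d c i + ∫ s in (0:ℝ)..t, blockAvg φ κ s i

/-- The increment vectors `f_0, …, f_{d+1}` of the truncated chain. -/
def fvec (d : ℕ) (i : ℕ) : Fin (d+2) → ℝ := fun k =>
  if i = 0 then (if (k : ℕ) = 1 then 1 else 0)
  else if i ≤ d then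
    (if (k : ℕ) = 0 then 1 else 0) + (if (k : ℕ) = i then -1 else 0)
      + (if (k : ℕ) = i + 1 then 1 else 0)
  else if (k : ℕ) = 0 then 1 else 0

/-- The switching times `t_i = δ - Σ_{l=i}^d (δ + [c^d]_l - [ψ_κ(δ)]_l)`, `t_{d+1} = δ`. -/
def tSwitch {d : ℕ} (ψδ : Fin (d+2) → ℝ) (c : ℕ → ℝ) (δ : ℝ) : ℕ → ℝ := fun i =>
  if i ≤ d then
    δ - ∑ l ∈ Finset.Icc i d,
      (δ + (∑ m ∈ Finset.range (l+1), cvecN d c m) - (∑ m ∈ Finset.range (l+1), toN ψδ m))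
  else δ

/-- The modified step derivative `γ*`: increment `f_{d+1}` on `[0,t_0)`, `f_i` on
`[t_i, t_{i+1})` before time `δ`, and `γ_κ` from `δ` on. -/
def gammaStar {d : ℕ} (g : ℝ → Fin (d+2) → ℝ) (ts : ℕ → ℝ) (δ : ℝ) (t : ℝ) :
    Fin (d+2) → ℝ :=
  if δ ≤ t then g t
  else if t < ts 0 then fvec d (d+1)
  else fvec d (sSup {i : ℕ | i ≤ d ∧ ts i ≤ t})

def tSwitchFull {d : ℕ} (φstar ℓC : C(I01, Fin (d+2) → ℝ)) (θ : ℝ) (κ : ℕ) (c : ℕ → ℝ)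
    (δ : ℝ) : ℕ → ℝ :=
  tSwitch (fun i => psiKappa (phiMix θ φstar ℓC) κ c δ i) c δ

/-- `ψ̇* = γ*` built from the data `φ*, ℓ, θ, κ, δ`. -/
def gammaStarFull {d : ℕ} (φstar ℓC : C(I01, Fin (d+2) → ℝ)) (θ : ℝ) (κ : ℕ) (c : ℕ → ℝ)
    (δ : ℝ) : ℝ → Fin (d+2) → ℝ :=
  gammaStar (fun t => blockAvg (phiMix θ φstar ℓC) κ t) (tSwitchFull φstar ℓC θ κ c δ) δ

/-- The modified path `ψ*(t) = c^d + ∫_0^t γ*(s) ds`. -/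
def psiStarFull {d : ℕ} (φstar ℓC : C(I01, Fin (d+2) → ℝ)) (θ : ℝ) (κ : ℕ) (c : ℕ → ℝ)
    (δ : ℝ) (t : ℝ) : Fin (d+2) → ℝ :=
  fun i => cvec d c i + ∫ s in (0:ℝ)..t, gammaStarFull φstar ℓC θ κ c δ s i

/-! ## The controlled chain of the lower bound -/

/-- Mean of the control at step `l`: `ψ̇*(l/n)` if `l ≤ ⌊δn⌋`, or if `l ≥ ⌈δn⌉` and the
state is above the threshold; otherwise the mean `ρm l` of the natural increment law. -/
def ctrlMean {d : ℕ} (γs : ℝ → Fin (d+2) → ℝ) (ρm : ℕ → Fin (d+2) → ℝ)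
    (Xb : ℕ → Fin (d+2) → ℝ) (c : ℕ → ℝ) (e : Fin (d+2) → ℝ) (θ δ : ℝ) (n l : ℕ) :
    Fin (d+2) → ℝ :=
  if l ≤ ⌊δ * (n : ℝ)⌋₊ ∨ (⌈δ * (n : ℝ)⌉₊ ≤ l ∧ ∀ i, (θ/4) * (e i * δ + cvec d c i) ≤ Xb l i)
  then γs ((l : ℝ) / n) else ρm l

/-- The martingale `M^n(j) = X̄^n(j) - (1/n) Σ_{l<j} Ē(Ȳ^n(l) | X̄^n(l)) - c^d`. -/
def ctrlMart {d : ℕ} (γs : ℝ → Fin (d+2) → ℝ) (ρm : ℕ → Fin (d+2) → ℝ)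
    (Xb : ℕ → Fin (d+2) → ℝ) (c : ℕ → ℝ) (e : Fin (d+2) → ℝ) (θ δ : ℝ) (n j : ℕ) :
    Fin (d+2) → ℝ :=
  fun i => Xb j i - (1/(n:ℝ)) * ∑ l ∈ Finset.range j, ctrlMean γs ρm Xb c e θ δ n l i
    - cvec d c i

/-- The stopping time `τ_n = n ∧ min{⌈δn⌉ ≤ l ≤ n : X̄_i^n(l) < (θ/4)(e_i δ + c_i), some i}`. -/
def stopTau {d : ℕ} (Xb : ℕ → Fin (d+2) → ℝ) (c : ℕ → ℝ) (e : Fin (d+2) → ℝ)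
    (θ δ : ℝ) (n : ℕ) : ℕ :=
  sInf ({n} ∪ {l : ℕ | ⌈δ * (n : ℝ)⌉₊ ≤ l ∧ l ≤ n
    ∧ ∃ i, Xb l i < (θ/4) * (e i * δ + cvec d c i)})



/-! ### Auxiliary lemmas for the proof -/


theorem lipschitz_ftc {K : NNReal} {f : ℝ → ℝ} (hf : LipschitzWith K f)
    {t : ℝ} (ht : 0 ≤ t) : ∫ s in (0:ℝ)..t, deriv f s = f t - f 0 := by
  have hcont : Continuous f := hf.continuous
  set h : ℕ → ℝ := fun n => (1:ℝ)/(n+1) with hh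
  have hpos : ∀ n, 0 < h n := fun n => by positivity
  set g : ℕ → ℝ → ℝ := fun n s => (f (s + h n) - f s) / h n with hg
  have hgcont : ∀ n, Continuous (g n) := fun n => by
    exact ((hcont.comp (continuous_id.add continuous_const)).sub hcont).div_const _
  have hgbd : ∀ n s, |g n s| ≤ (K:ℝ) := by
    intro n s
    have h1 : |f (s + h n) - f s| ≤ (K:ℝ) * (h n) := by
      have := hf.dist_le_mul (s + h n) s
      simpa [Real.dist_eq, abs_of_pos (hpos n)] using this
    rw [hg, abs_div, abs_of_pos (hpos n)]
    rw [div_le_iff₀ (hpos n)]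
    exact h1
  have hseq : ∀ s : ℝ, Tendsto (fun n => s + h n) atTop (𝓝[≠] s) := by
    intro s
    apply tendsto_nhdsWithin_of_tendsto_nhds_of_eventually_within
    · have : Tendsto (fun n : ℕ => s + h n) atTop (𝓝 (s + 0)) :=
        tendsto_const_nhds.add tendsto_one_div_add_atTop_nhds_zero_nat
      simpa using this
    · exact Eventually.of_forall fun n => by
        simp only [mem_compl_iff, mem_singleton_iff]
        have := hpos n; intro hcon; nlinarith [hcon]
  have htend : ∀ᵐ s, Tendsto (fun n => g n s) atTop (𝓝 (deriv f s)) := by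
    filter_upwards [hf.ae_differentiableAt] with s hs
    have hd := hs.hasDerivAt
    rw [hasDerivAt_iff_tendsto_slope] at hd
    have := hd.comp (hseq s)
    convert this using 2 with n
    rw [hg]; simp only [Function.comp_apply, slope_def_field]
    ring_nf
  have hDCT : Tendsto (fun n => ∫ s in Ioc (0:ℝ) t, g n s) atTop
      (𝓝 (∫ s in Ioc (0:ℝ) t, deriv f s)) := by
    apply tendsto_integral_of_dominated_convergence (fun _ => (K:ℝ))
    · exact fun n => (hgcont n).aestronglyMeasurable.restrict
    · exact integrable_const _
    · intro n
      exact Eventually.of_forall fun s => by simpa [Real.norm_eq_abs] using hgbd n s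
    · exact ae_restrict_of_ae htend
  have hii : ∀ a b : ℝ, IntervalIntegrable f volume a b := fun a b =>
    hcont.intervalIntegrable a b
  have hgi : ∀ n, ∫ s in (0:ℝ)..t, g n s
      = ((∫ u in t..(t + h n), f u) - ∫ u in (0:ℝ)..(h n), f u) / h n := by
    intro n
    rw [hg]
    simp only
    rw [intervalIntegral.integral_div]
    congr 1
    have C1 : IntervalIntegrable (fun x : ℝ => f (x + h n)) volume 0 t :=
      (hcont.comp (continuous_id.add continuous_const)).intervalIntegrable _ _
    rw [intervalIntegral.integral_sub C1 (hii 0 t)]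
    rw [intervalIntegral.integral_comp_add_right f (h n), zero_add]
    have A := intervalIntegral.integral_add_adjacent_intervals (hii (h n) t) (hii t (t + h n))
    have B := intervalIntegral.integral_add_adjacent_intervals (hii 0 (h n)) (hii (h n) t)
    linarith
  have lim1 : Tendsto (fun n => (∫ u in t..(t + h n), f u) / h n) atTop (𝓝 (f t)) := by
    have hF1 : HasDerivAt (fun u => ∫ x in t..u, f x) (f t) t :=
      intervalIntegral.integral_hasDerivAt_right (hii t t)
        (hcont.stronglyMeasurableAtFilter _ _) hcont.continuousAt
    rw [hasDerivAt_iff_tendsto_slope] at hF1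
    have := hF1.comp (hseq t)
    convert this using 2 with n
    simp only [Function.comp_apply, slope_def_field, intervalIntegral.integral_same]
    ring_nf
  have lim0 : Tendsto (fun n => (∫ u in (0:ℝ)..(h n), f u) / h n) atTop (𝓝 (f 0)) := by
    have hF0 : HasDerivAt (fun u => ∫ x in (0:ℝ)..u, f x) (f 0) 0 :=
      intervalIntegral.integral_hasDerivAt_right (hii 0 0)
        (hcont.stronglyMeasurableAtFilter _ _) hcont.continuousAt
    rw [hasDerivAt_iff_tendsto_slope] at hF0
    have := hF0.comp (hseq 0)
    convert this using 2 with n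
    simp only [Function.comp_apply, slope_def_field, intervalIntegral.integral_same,
      zero_add]
    ring_nf
  have lim2 : Tendsto (fun n => ∫ s in (0:ℝ)..t, g n s) atTop (𝓝 (f t - f 0)) := by
    simp only [hgi, sub_div]
    exact lim1.sub lim0
  have heq : (fun n => ∫ s in (0:ℝ)..t, g n s) = fun n => ∫ s in Ioc (0:ℝ) t, g n s := by
    funext n; exact intervalIntegral.integral_of_le ht
  rw [heq] at lim2
  rw [intervalIntegral.integral_of_le ht]
  exact tendsto_nhds_unique hDCT lim2

lemma entTerm_ne_bot (a b : ℝ) : entTerm a b ≠ ⊥ := by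
  unfold entTerm
  split_ifs
  · simp
  · simp
  · exact EReal.coe_ne_bot _

lemma entTerm_zero (b : ℝ) : entTerm 0 b = 0 := by simp [entTerm]

lemma entTerm_mono_right {a b b' : ℝ} (ha : 0 ≤ a) (hb : 0 ≤ b) (hbb : b ≤ b') :
    entTerm a b' ≤ entTerm a b := by
  rcases eq_or_ne a 0 with h0 | h0
  · simp [entTerm, h0]
  have hapos : 0 < a := lt_of_le_of_ne ha (Ne.symm h0)
  rcases le_or_gt b 0 with hb0 | hb0
  · have hbt : entTerm a b = ⊤ := by rw [entTerm, if_neg h0, if_pos hb0]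
    rw [hbt]; exact le_top
  have hb'0 : 0 < b' := lt_of_lt_of_le hb0 hbb
  have e1 : entTerm a b = ((a * Real.log (a / b) : ℝ) : EReal) := by
    rw [entTerm, if_neg h0, if_neg (not_le.mpr hb0)]
  have e2 : entTerm a b' = ((a * Real.log (a / b') : ℝ) : EReal) := by
    rw [entTerm, if_neg h0, if_neg (not_le.mpr hb'0)]
  rw [e1, e2]
  apply EReal.coe_le_coe_iff.mpr
  apply mul_le_mul_of_nonneg_left _ ha
  exact Real.log_le_log (by positivity) (div_le_div_of_nonneg_left ha hb0 hbb)

lemma real_log_sum {a1 a2 b1 b2 : ℝ} (ha1 : 0 < a1) (ha2 : 0 < a2) (hb1 : 0 < b1)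
    (hb2 : 0 < b2) :
    (a1 + a2) * Real.log ((a1 + a2) / (b1 + b2))
      ≤ a1 * Real.log (a1 / b1) + a2 * Real.log (a2 / b2) := by
  set s := a1 + a2 with hsdef
  set T := b1 + b2 with hTdef
  have hs : 0 < s := by positivity
  have hT : 0 < T := by positivity
  have key : ∀ a b : ℝ, 0 < a → 0 < b →
      a - b * s / T ≤ a * Real.log (a / b) - a * Real.log (s / T) := by
    intro a b hA hB
    have hlog : Real.log (b * s / (a * T)) ≤ b * s / (a * T) - 1 :=
      Real.log_le_sub_one_of_pos (by positivity)
    have e1 : Real.log (b * s / (a * T)) = Real.log b + Real.log s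
        - (Real.log a + Real.log T) := by
      rw [Real.log_div (by positivity) (by positivity), Real.log_mul hB.ne' hs.ne',
        Real.log_mul hA.ne' hT.ne']
    have e2 : Real.log (a / b) = Real.log a - Real.log b := Real.log_div hA.ne' hB.ne'
    have e3 : Real.log (s / T) = Real.log s - Real.log T := Real.log_div hs.ne' hT.ne'
    have h3 : a * (Real.log (a / b) - Real.log (s / T)) ≥ a * (1 - b * s / (a * T)) := by
      have h2 : Real.log (a / b) - Real.log (s / T) = -Real.log (b * s / (a * T)) := by
        rw [e1, e2, e3]; ring
      rw [h2]
      have := mul_le_mul_of_nonneg_left hlog hA.le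
      nlinarith
    have h4 : a * (1 - b * s / (a * T)) = a - b * s / T := by
      field_simp
    nlinarith [h3, h4]
  have k1 := key a1 b1 ha1 hb1
  have k2 := key a2 b2 ha2 hb2
  have hsum : b1 * s / T + b2 * s / T = s := by
    rw [← add_div, ← add_mul, ← hTdef]
    field_simp
  have hexp : s * Real.log (s / T) = a1 * Real.log (s / T) + a2 * Real.log (s / T) := by
    rw [hsdef]; ring
  linarith

lemma entTerm_add_le {a1 a2 b1 b2 : ℝ} (ha1 : 0 ≤ a1) (ha2 : 0 ≤ a2) (hb1 : 0 ≤ b1)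
    (hb2 : 0 ≤ b2) :
    entTerm (a1 + a2) (b1 + b2) ≤ entTerm a1 b1 + entTerm a2 b2 := by
  rcases eq_or_ne a1 0 with h1 | h1
  · subst h1
    rw [zero_add, entTerm_zero, zero_add]
    exact entTerm_mono_right ha2 hb2 (by linarith)
  · rcases eq_or_ne a2 0 with h2 | h2
    · subst h2
      rw [add_zero, entTerm_zero, add_zero]
      exact entTerm_mono_right ha1 hb1 (by linarith)
    · have ha1' : 0 < a1 := lt_of_le_of_ne ha1 (Ne.symm h1)
      have ha2' : 0 < a2 := lt_of_le_of_ne ha2 (Ne.symm h2)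
      rcases le_or_gt b1 0 with hb1' | hb1'
      · have : entTerm a1 b1 = ⊤ := by rw [entTerm, if_neg h1, if_pos hb1']
        rw [this, EReal.top_add_of_ne_bot (entTerm_ne_bot _ _)]
        exact le_top
      · rcases le_or_gt b2 0 with hb2' | hb2'
        · have : entTerm a2 b2 = ⊤ := by rw [entTerm, if_neg h2, if_pos hb2']
          rw [this, EReal.add_top_of_ne_bot (entTerm_ne_bot _ _)]
          exact le_top
        · have hsum : a1 + a2 ≠ 0 := by positivity
          have hbsum : ¬ (b1 + b2 ≤ 0) := by push_neg; positivity
          rw [entTerm, if_neg hsum, if_neg hbsum, entTerm, if_neg h1,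
            if_neg (not_le.mpr hb1'), entTerm, if_neg h2, if_neg (not_le.mpr hb2'),
            ← EReal.coe_add]
          exact EReal.coe_le_coe_iff.mpr (real_log_sum ha1' ha2' hb1' hb2')

lemma toN_lt {d : ℕ} (g : Fin (d+2) → ℝ) {i : ℕ} (h : i < d+2) : toN g i = g ⟨i, h⟩ :=
  dif_pos h

lemma pext_continuous {d : ℕ} (φ : C(I01, Fin (d+2) → ℝ)) (i : Fin (d+2)) :
    Continuous (fun t => pext φ t i) :=
  (continuous_apply i).comp (φ.continuous.comp continuous_projIcc)

lemma pext_zero {d : ℕ} (φ : C(I01, Fin (d+2) → ℝ)) : pext φ 0 = φ pt0 := by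
  unfold pext
  have h : Set.projIcc (0:ℝ) 1 zero_le_one 0 = pt0 := by
    rw [Set.projIcc_left]
    exact Subtype.ext rfl
  rw [h]

lemma sum_toN {d : ℕ} (g : Fin (d+2) → ℝ) (w : ℕ → ℝ) :
    ∑ i ∈ Finset.range (d+2), w i * toN g i = ∑ i : Fin (d+2), w (i : ℕ) * g i := by
  rw [← Fin.sum_univ_eq_sum_range (fun i => w i * toN g i) (d+2)]
  apply Finset.sum_congr rfl
  intro i _
  rw [toN_lt g i.isLt]

lemma pderivC_bound {d : ℕ} {φ : C(I01, Fin (d+2) → ℝ)} {i : Fin (d+2)}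
    (hlip : LipschitzWith 1 (fun s : ℝ => pext φ s i)) (s : ℝ) :
    |pderivC φ s i| ≤ 1 := by
  have := norm_deriv_le_of_lipschitz hlip (x₀ := s)
  simpa [pderivC, Real.norm_eq_abs] using this

lemma pderivC_intervalIntegrable {d : ℕ} {φ : C(I01, Fin (d+2) → ℝ)} {i : Fin (d+2)}
    (hlip : LipschitzWith 1 (fun s : ℝ => pext φ s i)) (a b : ℝ) :
    IntervalIntegrable (fun s => pderivC φ s i) volume a b := by
  rw [intervalIntegrable_iff]
  apply Integrable.mono' (g := fun _ => (1:ℝ))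
  · apply (integrableOn_const_iff (C := (1:ℝ))).mpr
    right
    exact measure_Ioc_lt_top
  · exact (measurable_deriv _).aestronglyMeasurable.restrict
  · exact Eventually.of_forall fun s => by simpa [Real.norm_eq_abs] using pderivC_bound hlip s

lemma sum_toN' {d : ℕ} (g : Fin (d+2) → ℝ) :
    ∑ i ∈ Finset.range (d+2), toN g i = ∑ i : Fin (d+2), g i := by
  have := sum_toN g (fun _ => 1)
  simpa using this

lemma cc_nonneg {c : ℕ → ℝ} {cc ctil : ℝ} (hLIM : LIMc c cc ctil) : 0 ≤ cc := by
  rw [hLIM.cc_eq]; exact tsum_nonneg hLIM.nonneg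

lemma ctil_nonneg {c : ℕ → ℝ} {cc ctil : ℝ} (hLIM : LIMc c cc ctil) : 0 ≤ ctil := by
  rw [hLIM.ctil_eq]
  exact tsum_nonneg (fun i => mul_nonneg (Nat.cast_nonneg i) (hLIM.nonneg i))

lemma sum_cvec {d : ℕ} {c : ℕ → ℝ} {cc ctil : ℝ} (hLIM : LIMc c cc ctil) :
    ∑ i : Fin (d+2), cvec d c i = cc := by
  rw [Fin.sum_univ_castSucc]
  have h1 : ∀ i : Fin (d+1), cvec d c i.castSucc = c i := by
    intro i
    rw [cvec, if_pos (by simpa using Nat.lt_succ_iff.mp i.isLt)]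
    rfl
  have h2 : cvec d c (Fin.last (d+1)) = ∑' k : ℕ, c (k + (d+1)) := by
    rw [cvec, if_neg (by simp)]
  rw [Finset.sum_congr rfl (fun i _ => h1 i), h2,
    Fin.sum_univ_eq_sum_range (fun i => c i) (d+1), hLIM.cc_eq]
  exact Summable.sum_add_tsum_nat_add (d+1) hLIM.summable

lemma sum_cvec_weighted {d : ℕ} {c : ℕ → ℝ} {cc ctil : ℝ} (hLIM : LIMc c cc ctil) :
    ∑ i : Fin (d+2), ((i : ℕ) : ℝ) * cvec d c i ≤ ctil := by
  rw [Fin.sum_univ_castSucc]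
  have h1 : ∀ i : Fin (d+1), ((i.castSucc : ℕ) : ℝ) * cvec d c i.castSucc
      = ((i : ℕ) : ℝ) * c i := by
    intro i
    rw [cvec, if_pos (by simpa using Nat.lt_succ_iff.mp i.isLt)]
    rfl
  have h2 : cvec d c (Fin.last (d+1)) = ∑' k : ℕ, c (k + (d+1)) := by
    rw [cvec, if_neg (by simp)]
  rw [Finset.sum_congr rfl (fun i _ => h1 i), h2,
    Fin.sum_univ_eq_sum_range (fun i => ((i:ℕ):ℝ) * c i) (d+1)]
  have htail : Summable (fun k : ℕ => ((k + (d+1) : ℕ) : ℝ) * c (k + (d+1))) :=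
    (summable_nat_add_iff (f := fun i : ℕ => (i : ℝ) * c i) (d+1)).mpr hLIM.mul_summable
  have hsplit : (∑ i ∈ Finset.range (d+1), ((i:ℕ):ℝ) * c i)
      + ∑' k : ℕ, ((k + (d+1) : ℕ) : ℝ) * c (k + (d+1)) = ctil := by
    rw [hLIM.ctil_eq]
    exact Summable.sum_add_tsum_nat_add (d+1) hLIM.mul_summable
  have hle : ((Fin.last (d+1) : ℕ) : ℝ) * ∑' k : ℕ, c (k + (d+1))
      ≤ ∑' k : ℕ, ((k + (d+1) : ℕ) : ℝ) * c (k + (d+1)) := by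
    rw [← tsum_mul_left]
    apply Summable.tsum_le_tsum _ (((summable_nat_add_iff (f := c) (d+1)).mpr hLIM.summable).mul_left _) htail
    intro k
    apply mul_le_mul_of_nonneg_right _ (hLIM.nonneg _)
    simp only [Fin.val_last]
    exact Nat.cast_le.mpr (by omega)
  linarith

lemma gamma_sum_bounds {d : ℕ} {c : ℕ → ℝ} {cc ctil : ℝ} (hLIM : LIMc c cc ctil)
    {φ : C(I01, Fin (d+2) → ℝ)} (hφ : φ ∈ Gamma d c)
    {t : ℝ} (ht : t ∈ Set.Icc (0:ℝ) 1) :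
    (∑ i ∈ Finset.range (d+2), xofN φ t i = cc + t)
    ∧ ∑ i ∈ Finset.range (d+2), ((i:ℕ):ℝ) * xofN φ t i ≤ ctil + t := by
  obtain ⟨h0, hnn, hlip, hae⟩ := hφ
  have hftc : ∀ i : Fin (d+2), pext φ t i = cvec d c i + ∫ s in (0:ℝ)..t, pderivC φ s i := by
    intro i
    have h1 : ∫ s in (0:ℝ)..t, pderivC φ s i = pext φ t i - pext φ 0 i :=
      lipschitz_ftc (hlip i) ht.1
    have h2 : pext φ 0 i = cvec d c i := by rw [pext_zero]; exact h0 i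
    rw [h1, h2]
    ring
  have key : ∀ w : ℕ → ℝ, ∑ i ∈ Finset.range (d+2), w i * xofN φ t i
      = (∑ i : Fin (d+2), w (i:ℕ) * cvec d c i)
        + ∫ s in (0:ℝ)..t, ∑ i : Fin (d+2), w (i:ℕ) * pderivC φ s i := by
    intro w
    have e1 : ∀ i : Fin (d+2), w (i:ℕ) * pext φ t i
        = w (i:ℕ) * cvec d c i + ∫ s in (0:ℝ)..t, w (i:ℕ) * pderivC φ s i := by
      intro i
      rw [intervalIntegral.integral_const_mul, hftc i]
      ring
    simp only [xofN]
    rw [sum_toN, Finset.sum_congr rfl (fun i _ => e1 i), Finset.sum_add_distrib,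
      ← intervalIntegral.integral_finset_sum]
    intro i _
    exact (pderivC_intervalIntegrable (hlip i) 0 t).const_mul _
  have hae' := (ae_restrict_iff' measurableSet_Icc).mp hae
  have hIoc : Set.uIoc (0:ℝ) t = Set.Ioc 0 t := Set.uIoc_of_le ht.1
  have hsum_v : ∀ s : ℝ, ∑ i : Fin (d+2), pderivC φ s i
      = ∑ i ∈ Finset.range (d+2), vofN φ s i := by
    intro s
    simp only [vofN]
    rw [sum_toN']
  have hsum_v' : ∀ s : ℝ, ∑ i : Fin (d+2), ((i:ℕ):ℝ) * pderivC φ s i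
      = ∑ i ∈ Finset.range (d+2), (i:ℝ) * vofN φ s i := by
    intro s
    simp only [vofN]
    rw [sum_toN]
  constructor
  · have h1 := key (fun _ => 1)
    simp only [one_mul] at h1
    rw [h1, sum_cvec hLIM]
    have hint1 : ∫ s in (0:ℝ)..t, ∑ i : Fin (d+2), pderivC φ s i = t := by
      rw [intervalIntegral.integral_congr_ae (g := fun _ => (1:ℝ))]
      · simp
      · filter_upwards [hae'] with s hs hsI
        rw [hIoc] at hsI
        have hs' := hs ⟨hsI.1.le, hsI.2.trans ht.2⟩
        rw [hsum_v s]
        exact hs'.2.1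
    rw [hint1]
  · have h1 := key (fun i : ℕ => (i:ℝ))
    rw [h1]
    have hII : IntervalIntegrable (fun s => ∑ i : Fin (d+2), ((i:ℕ):ℝ) * pderivC φ s i)
        volume 0 t := by
      have := IntervalIntegrable.sum (μ := volume) (a := 0) (b := t) Finset.univ
        (f := fun (i : Fin (d+2)) (s : ℝ) => ((i:ℕ):ℝ) * pderivC φ s i)
        (fun i _ => (pderivC_intervalIntegrable (hlip i) 0 t).const_mul _)
      rw [Finset.sum_fn] at this
      exact this
    have hint2 : ∫ s in (0:ℝ)..t, ∑ i : Fin (d+2), ((i:ℕ):ℝ) * pderivC φ s i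
        ≤ ∫ s in (0:ℝ)..t, (1:ℝ) := by
      apply intervalIntegral.integral_mono_ae_restrict ht.1 hII intervalIntegrable_const
      have := ae_restrict_of_ae_restrict_of_subset
        (Set.Icc_subset_Icc le_rfl ht.2) hae
      filter_upwards [this] with s hs
      rw [hsum_v' s]
      calc ∑ i ∈ Finset.range (d+2), (i:ℝ) * vofN φ s i
          = ∑ i ∈ Finset.range (d+1), numA (vofN φ s) i := hs.2.2.1
        _ ≤ 1 := hs.2.2.2
    have h2 := sum_cvec_weighted (d := d) hLIM
    simp only [intervalIntegral.integral_const, smul_eq_mul, mul_one] at hint2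
    linarith

lemma toN_ge {d : ℕ} (g : Fin (d+2) → ℝ) {i : ℕ} (h : ¬ i < d+2) : toN g i = 0 :=
  dif_neg h

lemma proj_coord {x : ∀ j : ℕ, C(I01, Fin (j+2) → ℝ)} (hx : x ∈ ProjLim)
    (d l : ℕ) (hl : l ≤ d) (u : I01) :
    x d u ⟨l, by omega⟩ = x (d+1) u ⟨l, by omega⟩ := by
  have h := hx d (d+1) (Nat.le_succ d)
  rw [← h]
  show truncMap d (d+1) (Nat.le_succ d) (x (d+1) u) ⟨l, by omega⟩ = _
  simp only [truncMap]
  rw [if_pos (show ((⟨l, by omega⟩ : Fin (d+2)) : ℕ) ≤ d from hl)]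
  rfl

lemma xofN_compat {x : ∀ j : ℕ, C(I01, Fin (j+2) → ℝ)} (hx : x ∈ ProjLim)
    {d l : ℕ} (hl : l ≤ d) (s : ℝ) :
    xofN (x d) s l = xofN (x (d+1)) s l := by
  simp only [xofN]
  rw [toN_lt _ (show l < d+2 by omega), toN_lt _ (show l < (d+1)+2 by omega)]
  exact proj_coord hx d l hl _

lemma vofN_compat {x : ∀ j : ℕ, C(I01, Fin (j+2) → ℝ)} (hx : x ∈ ProjLim)
    {d l : ℕ} (hl : l ≤ d) (s : ℝ) :
    vofN (x d) s l = vofN (x (d+1)) s l := by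
  simp only [vofN]
  rw [toN_lt _ (show l < d+2 by omega), toN_lt _ (show l < (d+1)+2 by omega)]
  simp only [pderivC]
  congr 1
  funext u
  exact proj_coord hx d l hl _

lemma numA_compat {x : ∀ j : ℕ, C(I01, Fin (j+2) → ℝ)} (hx : x ∈ ProjLim)
    {d i : ℕ} (hi : i ≤ d) (s : ℝ) :
    numA (vofN (x d) s) i = numA (vofN (x (d+1)) s) i := by
  unfold numA
  congr 1
  exact Finset.sum_congr rfl fun l hl =>
    vofN_compat hx (le_trans (Nat.lt_succ_iff.mp (Finset.mem_range.mp hl)) hi) s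

lemma ldE_mono_step (p β : ℝ → ℝ) {p0 β0 β1 : ℝ} (hND : ND p β p0 β0 β1)
    {c : ℕ → ℝ} {cc ctil : ℝ} (hLIM : LIMc c cc ctil)
    {x : ∀ j : ℕ, C(I01, Fin (j+2) → ℝ)} (hx : x ∈ GammaStar c)
    {t : ℝ} (ht : t ∈ Set.Icc (0:ℝ) 1) (d : ℕ)
    (hG1 : ∀ i ≤ d+1, 0 ≤ ∑ l ∈ Finset.range (i+1), vofN (x (d+1)) t l
            ∧ ∑ l ∈ Finset.range (i+1), vofN (x (d+1)) t l ≤ 1)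
    (hG2 : ∑ i ∈ Finset.range (d+2), numA (vofN (x (d+1)) t) i ≤ 1) :
    LdE p β cc ctil d t (xofN (x d) t) (vofN (x d) t)
      ≤ LdE p β cc ctil (d+1) t (xofN (x (d+1)) t) (vofN (x (d+1)) t) := by
  set X := xofN (x (d+1)) t with hXdef
  set V := vofN (x (d+1)) t with hVdef
  have hp1 : p t ≤ p0 := hND.p_le t ht
  have hβ : β0 ≤ β t := hND.β_lb t ht
  have hβpos : 0 < β t := lt_of_lt_of_le hND.β0_pos hβ
  have h1p : 0 ≤ 1 - p t := by linarith [hND.p0_lt_one]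
  have hccn := cc_nonneg hLIM
  have hctn := ctil_nonneg hLIM
  have hσ : 0 ≤ sigf β cc ctil t := by
    unfold sigf
    have h1 : 0 ≤ (1 + β t) * t := mul_nonneg (by linarith) ht.1
    have h2 : 0 ≤ cc * β t := mul_nonneg hccn hβpos.le
    linarith
  have hXnn : ∀ i, 0 ≤ X i := by
    intro i
    rw [hXdef]
    simp only [xofN]
    by_cases h : i < (d+1)+2
    · rw [toN_lt _ h]
      exact (hx.2 (d+1)).2.1 _ _
    · rw [toN_ge _ h]
  have hA1 : 0 ≤ numA V (d+1) := by
    unfold numA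
    linarith [(hG1 (d+1) le_rfl).2]
  have hA2 : 0 ≤ numALast V (d+1) := by
    unfold numALast
    linarith [hG2]
  have hB1 : 0 ≤ denB p β cc ctil t X (d+1) := by
    unfold denB
    rw [if_neg (Nat.succ_ne_zero d)]
    apply mul_nonneg h1p
    apply div_nonneg (mul_nonneg _ (hXnn _)) hσ
    have : (0:ℝ) ≤ ((d+1 : ℕ) : ℝ) := Nat.cast_nonneg _
    linarith
  have hB2 : 0 ≤ denBLast p β cc ctil t X (d+1) := by
    unfold denBLast
    apply mul_nonneg h1p
    rcases eq_or_lt_of_le hσ with hσ0 | hσ0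
    · rw [← hσ0, div_zero]
      norm_num
    · have hsb := gamma_sum_bounds hLIM (hx.2 (d+1)) ht
      rw [← hXdef] at hsb
      have hS : ∑ i ∈ Finset.range (d+2), ((i:ℝ) + β t) * X i ≤ sigf β cc ctil t := by
        have e : ∑ i ∈ Finset.range (d+2), ((i:ℝ) + β t) * X i
            = (∑ i ∈ Finset.range (d+2), (i:ℝ) * X i)
              + β t * ∑ i ∈ Finset.range (d+2), X i := by
          rw [Finset.mul_sum, ← Finset.sum_add_distrib]
          exact Finset.sum_congr rfl fun i _ => by ring
        have m1 : ∑ i ∈ Finset.range (d+2), (i:ℝ) * X i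
            ≤ ∑ i ∈ Finset.range ((d+1)+2), ((i:ℕ):ℝ) * X i := by
          conv_rhs => rw [show (d+1)+2 = (d+2)+1 from rfl, Finset.sum_range_succ]
          have h := mul_nonneg (Nat.cast_nonneg (d+2) : (0:ℝ) ≤ ((d+2:ℕ):ℝ)) (hXnn (d+2))
          push_cast at h ⊢
          linarith
        have m2 : ∑ i ∈ Finset.range (d+2), X i ≤ ∑ i ∈ Finset.range ((d+1)+2), X i := by
          conv_rhs => rw [show (d+1)+2 = (d+2)+1 from rfl, Finset.sum_range_succ]
          linarith [hXnn (d+2)]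
        have m2' : β t * ∑ i ∈ Finset.range (d+2), X i ≤ β t * (cc + t) := by
          apply mul_le_mul_of_nonneg_left _ hβpos.le
          rw [← hsb.1]
          exact m2
        rw [e]
        unfold sigf
        have m1' : ∑ i ∈ Finset.range (d+2), (i:ℝ) * X i ≤ ctil + t := le_trans m1 hsb.2
        linarith
      rw [sub_nonneg]
      exact (div_le_one hσ0).mpr hS
  -- rewrite the left-hand side in terms of the level-(d+1) data
  have hL : LdE p β cc ctil d t (xofN (x d) t) (vofN (x d) t) = LdE p β cc ctil d t X V := by
    unfold LdE
    congr 1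
    · apply Finset.sum_congr rfl
      intro i hi
      have hi' : i ≤ d := Nat.lt_succ_iff.mp (Finset.mem_range.mp hi)
      rw [numA_compat hx.1 hi' t]
      congr 1
      unfold denB
      by_cases h0 : i = 0
      · subst h0
        simp only [if_pos]
        rw [xofN_compat hx.1 (Nat.zero_le d) t]
      · simp only [if_neg h0]
        rw [xofN_compat hx.1 hi' t]
    · have e1 : numALast (vofN (x d) t) d = numALast V d := by
        unfold numALast
        congr 1
        exact Finset.sum_congr rfl fun i hi =>
          numA_compat hx.1 (Nat.lt_succ_iff.mp (Finset.mem_range.mp hi)) t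
      have e2 : denBLast p β cc ctil t (xofN (x d) t) d = denBLast p β cc ctil t X d := by
        unfold denBLast
        congr 3
        exact Finset.sum_congr rfl fun i hi => by
          rw [xofN_compat hx.1 (Nat.lt_succ_iff.mp (Finset.mem_range.mp hi)) t]
      rw [e1, e2]
  have hAeq : numALast V d = numA V (d+1) + numALast V (d+1) := by
    unfold numALast
    conv_rhs => rw [Finset.sum_range_succ]
    ring
  have hBeq : denBLast p β cc ctil t X d
      = denB p β cc ctil t X (d+1) + denBLast p β cc ctil t X (d+1) := by
    unfold denBLast denB
    rw [if_neg (Nat.succ_ne_zero d)]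
    conv_rhs => rw [Finset.sum_range_succ, add_div]
    push_cast
    ring
  have hR : LdE p β cc ctil (d+1) t X V
      = (∑ i ∈ Finset.range (d+1), entTerm (numA V i) (denB p β cc ctil t X i))
        + (entTerm (numA V (d+1)) (denB p β cc ctil t X (d+1))
           + entTerm (numALast V (d+1)) (denBLast p β cc ctil t X (d+1))) := by
    unfold LdE
    rw [Finset.sum_range_succ, add_assoc]
  have hL2 : LdE p β cc ctil d t X V
      = (∑ i ∈ Finset.range (d+1), entTerm (numA V i) (denB p β cc ctil t X i))
        + entTerm (numA V (d+1) + numALast V (d+1))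
            (denB p β cc ctil t X (d+1) + denBLast p β cc ctil t X (d+1)) := by
    unfold LdE
    rw [hAeq, hBeq]
  rw [hL, hL2, hR]
  exact add_le_add_right (entTerm_add_le hA1 hA2 hB1 hB2) _

def entR (a b : ℝ) : ℝ := if a = 0 then 0 else a * Real.log (a / b)

lemma entTerm_eq (a b : ℝ) :
    entTerm a b = if a = 0 ∨ 0 < b then ((entR a b : ℝ) : EReal) else (⊤ : EReal) := by
  unfold entTerm entR
  rcases eq_or_ne a 0 with h | h
  · simp [h]
  · rcases le_or_gt b 0 with hb | hb
    · simp [h, hb, not_lt.mpr hb]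
    · simp [h, hb, not_le.mpr hb]

lemma erealToENNReal_coe (r : ℝ) : erealToENNReal r = ENNReal.ofReal r := by
  unfold erealToENNReal
  rw [if_neg (EReal.coe_ne_top r), EReal.toReal_coe]

lemma erealToENNReal_top : erealToENNReal ⊤ = ⊤ := if_pos rfl

lemma sum_entTerm_ite (n : ℕ) (A B : ℕ → ℝ) :
    (∑ i ∈ Finset.range n, entTerm (A i) (B i))
      = if ∀ i ∈ Finset.range n, A i = 0 ∨ 0 < B i
        then (((∑ i ∈ Finset.range n, entR (A i) (B i)) : ℝ) : EReal) else (⊤ : EReal) := by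
  induction n with
  | zero => simp
  | succ n ih =>
    by_cases hall : ∀ i ∈ Finset.range n, A i = 0 ∨ 0 < B i
    · by_cases hn : A n = 0 ∨ 0 < B n
      · have hall' : ∀ i ∈ Finset.range (n+1), A i = 0 ∨ 0 < B i := by
          intro i hi
          rcases Nat.lt_succ_iff_lt_or_eq.mp (Finset.mem_range.mp hi) with h | h
          · exact hall i (Finset.mem_range.mpr h)
          · subst h; exact hn
        rw [Finset.sum_range_succ, ih, if_pos hall, entTerm_eq, if_pos hn, ← EReal.coe_add,
          if_pos hall', Finset.sum_range_succ]
      · have hall' : ¬ ∀ i ∈ Finset.range (n+1), A i = 0 ∨ 0 < B i :=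
          fun h => hn (h n (Finset.self_mem_range_succ n))
        rw [Finset.sum_range_succ, ih, if_pos hall, entTerm_eq, if_neg hn, if_neg hall']
        exact EReal.coe_add_top _
    · have hall' : ¬ ∀ i ∈ Finset.range (n+1), A i = 0 ∨ 0 < B i :=
        fun h => hall (fun i hi => h i (Finset.mem_range.mpr
          (Nat.lt_succ_of_lt (Finset.mem_range.mp hi))))
      rw [Finset.sum_range_succ, ih, if_neg hall, if_neg hall',
        EReal.top_add_of_ne_bot (entTerm_ne_bot _ _)]

lemma erealToENNReal_ldE (p β : ℝ → ℝ) (cc ctil : ℝ) (d : ℕ) (t : ℝ) (x v : ℕ → ℝ) :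
    erealToENNReal (LdE p β cc ctil d t x v)
      = if (∀ i ∈ Finset.range (d+1), numA v i = 0 ∨ 0 < denB p β cc ctil t x i)
          ∧ (numALast v d = 0 ∨ 0 < denBLast p β cc ctil t x d)
        then ENNReal.ofReal
          ((∑ i ∈ Finset.range (d+1), entR (numA v i) (denB p β cc ctil t x i))
            + entR (numALast v d) (denBLast p β cc ctil t x d))
        else ⊤ := by
  unfold LdE
  rw [sum_entTerm_ite, entTerm_eq]
  by_cases h1 : ∀ i ∈ Finset.range (d+1), numA v i = 0 ∨ 0 < denB p β cc ctil t x i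
  · by_cases h2 : numALast v d = 0 ∨ 0 < denBLast p β cc ctil t x d
    · rw [if_pos h1, if_pos h2, if_pos ⟨h1, h2⟩, ← EReal.coe_add, erealToENNReal_coe]
    · rw [if_pos h1, if_neg h2, if_neg (fun h => h2 h.2), EReal.coe_add_top,
        erealToENNReal_top]
  · by_cases h2 : numALast v d = 0 ∨ 0 < denBLast p β cc ctil t x d
    · rw [if_neg h1, if_pos h2, EReal.top_add_coe, erealToENNReal_top,
        if_neg (fun h : _ ∧ _ => h1 h.1)]
    · rw [if_neg h1, if_neg h2, EReal.top_add_top, erealToENNReal_top,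
        if_neg (fun h : _ ∧ _ => h1 h.1)]

lemma aemeasurable_pc {f : ℝ → ℝ} (hpc : PiecewiseContinuousOn01 f) :
    AEMeasurable f (volume.restrict (Set.Icc (0:ℝ) 1)) := by
  obtain ⟨D, hD⟩ := hpc
  have hD0 : volume (D : Set ℝ) = 0 := D.finite_toSet.measure_zero volume
  have hco : ContinuousOn f (Set.Icc (0:ℝ) 1 \ D) := by
    intro t htd
    exact (hD t htd.1 htd.2).mono Set.diff_subset
  have hmeas : MeasurableSet (Set.Icc (0:ℝ) 1 \ D) :=
    measurableSet_Icc.diff (D.finite_toSet.measurableSet)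
  have h1 : AEMeasurable f (volume.restrict (Set.Icc (0:ℝ) 1 \ D)) := hco.aemeasurable hmeas
  have h2 : (Set.Icc (0:ℝ) 1 : Set ℝ) =ᵐ[volume] (Set.Icc (0:ℝ) 1 \ D : Set ℝ) :=
    (MeasureTheory.diff_ae_eq_self.mpr
      (measure_mono_null Set.inter_subset_right hD0)).symm
  rw [Measure.restrict_congr_set h2]
  exact h1

lemma measurable_entR {A B : ℝ → ℝ} (hA : Measurable A) (hB : Measurable B) :
    Measurable (fun t => entR (A t) (B t)) := by
  unfold entR
  apply Measurable.ite
  · have : {t : ℝ | A t = 0} = A ⁻¹' {0} := by ext t; simp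
    rw [this]
    exact hA (measurableSet_singleton 0)
  · exact measurable_const
  · exact hA.mul (Real.measurable_log.comp (hA.div hB))

lemma ldE_congr_pt {p β p' β' : ℝ → ℝ} {cc ctil : ℝ} {d : ℕ} {t : ℝ} {x v : ℕ → ℝ}
    (h1 : p t = p' t) (h2 : β t = β' t) :
    LdE p β cc ctil d t x v = LdE p' β' cc ctil d t x v := by
  unfold LdE denB denBLast sigf
  simp only [h1, h2]

lemma ldE_aemeasurable (p β : ℝ → ℝ) {p0 β0 β1 : ℝ} (hND : ND p β p0 β0 β1)
    (cc ctil : ℝ) (d : ℕ) (φ : C(I01, Fin (d+2) → ℝ)) :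
    AEMeasurable (fun t => erealToENNReal (LdE p β cc ctil d t (xofN φ t) (vofN φ t)))
      (volume.restrict (Set.Icc (0:ℝ) 1)) := by
  have hp := aemeasurable_pc hND.p_pc
  have hβ := aemeasurable_pc hND.β_pc
  set p' := hp.mk p with hp'def
  set β' := hβ.mk β with hβ'def
  have hp'm : Measurable p' := hp.measurable_mk
  have hβ'm : Measurable β' := hβ.measurable_mk
  -- component measurability
  have hv : ∀ l, Measurable (fun t => vofN φ t l) := by
    intro l
    simp only [vofN]
    by_cases h : l < d+2
    · simp only [toN, dif_pos h]
      exact measurable_deriv _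
    · simp only [toN, dif_neg h]
      exact measurable_const
  have hxm : ∀ l, Measurable (fun t => xofN φ t l) := by
    intro l
    simp only [xofN]
    by_cases h : l < d+2
    · simp only [toN, dif_pos h]
      exact (pext_continuous φ ⟨l, h⟩).measurable
    · simp only [toN, dif_neg h]
      exact measurable_const
  have hnumA : ∀ i, Measurable (fun t => numA (vofN φ t) i) := by
    intro i
    unfold numA
    exact measurable_const.sub (Finset.measurable_sum _ (fun l _ => hv l))
  have hnumAL : Measurable (fun t => numALast (vofN φ t) d) := by
    unfold numALast
    exact measurable_const.sub (Finset.measurable_sum _ (fun i _ => hnumA i))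
  have hsig : Measurable (fun t => sigf β' cc ctil t) := by
    unfold sigf
    exact (((measurable_const.add hβ'm).mul measurable_id).add measurable_const).add
      (measurable_const.mul hβ'm)
  have hdenB : ∀ i, Measurable (fun t => denB p' β' cc ctil t (xofN φ t) i) := by
    intro i
    unfold denB
    by_cases h : i = 0
    · simp only [h, if_pos]
      exact hp'm.add ((measurable_const.sub hp'm).mul ((hβ'm.mul (hxm 0)).div hsig))
    · simp only [if_neg h]
      exact (measurable_const.sub hp'm).mul (((measurable_const.add hβ'm).mul (hxm i)).div hsig)
  have hdenBL : Measurable (fun t => denBLast p' β' cc ctil t (xofN φ t) d) := by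
    unfold denBLast
    apply (measurable_const.sub hp'm).mul
    apply measurable_const.sub
    apply Measurable.div _ hsig
    apply Finset.measurable_sum
    intro i _
    exact (measurable_const.add hβ'm).mul (hxm i)
  -- measurability of the primed integrand
  have hmeas : Measurable
      (fun t => erealToENNReal (LdE p' β' cc ctil d t (xofN φ t) (vofN φ t))) := by
    have hrw : (fun t => erealToENNReal (LdE p' β' cc ctil d t (xofN φ t) (vofN φ t)))
        = fun t =>
          if (∀ i ∈ Finset.range (d+1), numA (vofN φ t) i = 0
                ∨ 0 < denB p' β' cc ctil t (xofN φ t) i)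
              ∧ (numALast (vofN φ t) d = 0 ∨ 0 < denBLast p' β' cc ctil t (xofN φ t) d)
          then ENNReal.ofReal
            ((∑ i ∈ Finset.range (d+1),
                entR (numA (vofN φ t) i) (denB p' β' cc ctil t (xofN φ t) i))
              + entR (numALast (vofN φ t) d) (denBLast p' β' cc ctil t (xofN φ t) d))
          else ⊤ := by
      funext t
      exact erealToENNReal_ldE p' β' cc ctil d t _ _
    rw [hrw]
    apply Measurable.ite
    · have e : {t : ℝ | (∀ i ∈ Finset.range (d+1), numA (vofN φ t) i = 0
              ∨ 0 < denB p' β' cc ctil t (xofN φ t) i)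
            ∧ (numALast (vofN φ t) d = 0 ∨ 0 < denBLast p' β' cc ctil t (xofN φ t) d)}
          = (⋂ i ∈ Finset.range (d+1),
              (((fun t => numA (vofN φ t) i) ⁻¹' {0})
                ∪ ((fun t => denB p' β' cc ctil t (xofN φ t) i) ⁻¹' Set.Ioi 0)))
            ∩ (((fun t => numALast (vofN φ t) d) ⁻¹' {0})
                ∪ ((fun t => denBLast p' β' cc ctil t (xofN φ t) d) ⁻¹' Set.Ioi 0)) := by
        ext t
        simp [Set.mem_Ioi]
      rw [e]
      apply MeasurableSet.inter
      · apply MeasurableSet.biInter ((Finset.range (d+1) : Set ℕ).to_countable)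
        intro i _
        exact ((hnumA i) (measurableSet_singleton 0)).union ((hdenB i) measurableSet_Ioi)
      · exact (hnumAL (measurableSet_singleton 0)).union (hdenBL measurableSet_Ioi)
    · apply ENNReal.measurable_ofReal.comp
      apply Measurable.add
      · apply Finset.measurable_sum
        intro i _
        exact measurable_entR (hnumA i) (hdenB i)
      · exact measurable_entR hnumAL hdenBL
    · exact measurable_const
  refine ⟨fun t => erealToENNReal (LdE p' β' cc ctil d t (xofN φ t) (vofN φ t)),
    hmeas, ?_⟩
  filter_upwards [hp.ae_eq_mk, hβ.ae_eq_mk] with t h1 h2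
  rw [ldE_congr_pt h1 h2]

lemma erealToENNReal_mono : Monotone erealToENNReal := by
  intro a b hab
  unfold erealToENNReal
  by_cases hb : b = ⊤
  · rw [if_pos hb]; exact le_top
  · have ha : a ≠ ⊤ := fun h => hb (top_le_iff.mp (h ▸ hab))
    rw [if_neg hb, if_neg ha]
    by_cases hbot : a = ⊥
    · rw [hbot]
      simp
    · exact ENNReal.ofReal_le_ofReal (EReal.toReal_le_toReal hab hbot hb)


/-- **Proposition (identification of `J^∞`).**  `J^∞` diverges off `Γ*`; on `Γ*` the
integrand `L_d(p_d(φ(t)))` is nondecreasing in `d` for a.e. `t` (so the limit exists), and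
`J^∞(φ) = ∫_0^1 lim_d L_d(p_d(φ(t))) dt`. -/
theorem jinf_identification
    (p β : ℝ → ℝ) (p0 β0 β1 : ℝ) (hND : ND p β p0 β0 β1)
    (c : ℕ → ℝ) (cc ctil : ℝ) (hLIM : LIMc c cc ctil) :
    (∀ x : ∀ j : ℕ, C(I01, Fin (j+2) → ℝ), x ∉ GammaStar c → Jinf p β c cc ctil x = ⊤)
    ∧ ∀ x ∈ GammaStar c,
        (∀ᵐ t ∂(volume.restrict (Set.Icc (0:ℝ) 1)),
          Monotone fun d : ℕ => LdE p β cc ctil d t (xofN (x d) t) (vofN (x d) t))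
        ∧ Jinf p β c cc ctil x
            = ∫⁻ t in Set.Icc (0:ℝ) 1,
                ⨆ d : ℕ, erealToENNReal (LdE p β cc ctil d t (xofN (x d) t) (vofN (x d) t)) := by
  constructor
  · intro x hx
    unfold Jinf
    by_cases hP : x ∈ ProjLim
    · rw [if_pos hP]
      have hd : ∃ d, x d ∉ Gamma d c := by
        by_contra h
        push_neg at h
        exact hx ⟨hP, h⟩
      obtain ⟨d, hd⟩ := hd
      refine le_antisymm le_top ?_
      calc (⊤:ℝ≥0∞) = Irate p β c cc ctil d (x d) := by rw [Irate, if_neg hd]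
        _ ≤ ⨆ d, Irate p β c cc ctil d (x d) :=
          le_iSup (fun d => Irate p β c cc ctil d (x d)) d
    · rw [if_neg hP]
  · intro x hx
    have hmono : ∀ᵐ t ∂(volume.restrict (Set.Icc (0:ℝ) 1)),
        Monotone fun d : ℕ => LdE p β cc ctil d t (xofN (x d) t) (vofN (x d) t) := by
      have hae : ∀ᵐ t ∂(volume.restrict (Set.Icc (0:ℝ) 1)), ∀ d : ℕ,
          (∀ i ≤ d, 0 ≤ ∑ l ∈ Finset.range (i+1), vofN (x d) t l
              ∧ ∑ l ∈ Finset.range (i+1), vofN (x d) t l ≤ 1)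
          ∧ (∑ i ∈ Finset.range (d+2), vofN (x d) t i = 1)
          ∧ (∑ i ∈ Finset.range (d+2), (i : ℝ) * vofN (x d) t i
              = ∑ i ∈ Finset.range (d+1), numA (vofN (x d) t) i)
          ∧ ∑ i ∈ Finset.range (d+1), numA (vofN (x d) t) i ≤ 1 :=
        ae_all_iff.mpr (fun d => (hx.2 d).2.2.2)
      filter_upwards [hae, ae_restrict_mem measurableSet_Icc] with t hti htm
      apply monotone_nat_of_le_succ
      intro d
      exact ldE_mono_step p β hND hLIM hx htm d ((hti (d+1)).1) ((hti (d+1)).2.2.2)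
    refine ⟨hmono, ?_⟩
    unfold Jinf
    rw [if_pos hx.1]
    have hIr : ∀ d, Irate p β c cc ctil d (x d)
        = ∫⁻ t in Set.Icc (0:ℝ) 1,
            erealToENNReal (LdE p β cc ctil d t (xofN (x d) t) (vofN (x d) t)) := by
      intro d
      rw [Irate, if_pos (hx.2 d)]
    have hmono' : ∀ᵐ t ∂(volume.restrict (Set.Icc (0:ℝ) 1)),
        Monotone fun d : ℕ =>
          erealToENNReal (LdE p β cc ctil d t (xofN (x d) t) (vofN (x d) t)) := by
      filter_upwards [hmono] with t h a b hab
      exact erealToENNReal_mono (h hab)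
    calc ⨆ d, Irate p β c cc ctil d (x d)
        = ⨆ d, ∫⁻ t in Set.Icc (0:ℝ) 1,
            erealToENNReal (LdE p β cc ctil d t (xofN (x d) t) (vofN (x d) t)) :=
          iSup_congr hIr
      _ = ∫⁻ t in Set.Icc (0:ℝ) 1,
            ⨆ d : ℕ, erealToENNReal (LdE p β cc ctil d t (xofN (x d) t) (vofN (x d) t)) :=
          (lintegral_iSup' (fun d => ldE_aemeasurable p β hND cc ctil d (x d)) hmono').symm

end
end

section
/- For φ ∈ Γ*, for almost every t ∈ [0,1] and all r < s, one has the monotonicity L_r(p_r(φ(t))) ≤ L_s(p_s(φ(t))). -/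
open MeasureTheory Real Set Filter Topology
open scoped ENNReal

noncomputable section

attribute [local instance] Classical.propDecidable

lemma entTerm_anti {a b b' : ℝ} (ha0 : 0 ≤ a) (h : b ≤ b') : entTerm a b' ≤ entTerm a b := by
  unfold entTerm
  by_cases ha : a = 0
  · simp [ha]
  · simp only [if_neg ha]
    by_cases hb : b ≤ 0
    · simp [hb]
    · have hb' : ¬ b' ≤ 0 := by linarith
      simp only [if_neg hb, if_neg hb']
      push_neg at hb
      have hA : 0 < a := lt_of_le_of_ne ha0 (Ne.symm ha)
      have h1 : a / b' ≤ a / b := div_le_div_of_nonneg_left hA.le hb h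
      have h2 : 0 < a / b' := div_pos hA (by linarith)
      have := Real.log_le_log h2 h1
      exact EReal.coe_le_coe_iff.mpr (mul_le_mul_of_nonneg_left this hA.le)

lemma entTerm_sum_le {ι : Type*} (F : Finset ι) (a b : ι → ℝ)
    (ha : ∀ i ∈ F, 0 ≤ a i) (hb : ∀ i ∈ F, 0 ≤ b i) :
    entTerm (∑ i ∈ F, a i) (∑ i ∈ F, b i) ≤ ∑ i ∈ F, entTerm (a i) (b i) := by
  induction F using Finset.induction_on with
  | empty => simp [entTerm]
  | insert _ _ hx ih =>
    rename_i j F'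
    rw [Finset.sum_insert hx, Finset.sum_insert hx, Finset.sum_insert hx]
    calc entTerm (a j + ∑ i ∈ F', a i) (b j + ∑ i ∈ F', b i)
        ≤ entTerm (a j) (b j) + entTerm (∑ i ∈ F', a i) (∑ i ∈ F', b i) :=
          entTerm_add_le (ha j (Finset.mem_insert_self _ _))
            (Finset.sum_nonneg fun i hi => ha i (Finset.mem_insert_of_mem hi))
            (hb j (Finset.mem_insert_self _ _))
            (Finset.sum_nonneg fun i hi => hb i (Finset.mem_insert_of_mem hi))
      _ ≤ entTerm (a j) (b j) + ∑ i ∈ F', entTerm (a i) (b i) :=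
          add_le_add_right (ih (fun i hi => ha i (Finset.mem_insert_of_mem hi))
            (fun i hi => hb i (Finset.mem_insert_of_mem hi))) _

lemma abs_deriv_le_of_lip {f : ℝ → ℝ} {L : NNReal} (hf : LipschitzWith L f) (t : ℝ) :
    |deriv f t| ≤ L := by
  by_cases hd : DifferentiableAt ℝ f t
  · have h1 := hd.hasDerivAt
    rw [hasDerivAt_iff_tendsto_slope] at h1
    refine le_of_tendsto h1.abs ?_
    filter_upwards [self_mem_nhdsWithin] with u hu
    have hne : u - t ≠ 0 := sub_ne_zero.mpr hu
    have hb : |f u - f t| ≤ L * |u - t| := by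
      have := hf.dist_le_mul u t
      rwa [Real.dist_eq, Real.dist_eq] at this
    rw [slope_def_field, abs_div]
    rw [div_le_iff₀ (abs_pos.mpr hne)]
    exact hb
  · rw [deriv_zero_of_not_differentiableAt hd]
    simpa using L.2

lemma lip_le_of_deriv_le {f : ℝ → ℝ} {L : NNReal} (hf : LipschitzWith L f) {C : ℝ}
    (hC : ∀ᵐ t ∂(volume.restrict (Set.Icc (0:ℝ) 1)), deriv f t ≤ C)
    {T : ℝ} (hT0 : 0 ≤ T) (hT1 : T ≤ 1) : f T ≤ f 0 + C * T := by
  have hfc : Continuous f := hf.continuous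
  set h : ℕ → ℝ := fun n => 1 / ((n:ℝ) + 1) with hh
  have hhpos : ∀ n, 0 < h n := fun n => by positivity
  have hhmul : ∀ n : ℕ, h n * ((n:ℝ) + 1) = 1 := fun n => by
    rw [hh]; field_simp
  have hint : ∀ a b : ℝ, IntervalIntegrable f volume a b :=
    fun a b => hfc.intervalIntegrable a b
  have hseq : ∀ a : ℝ, Tendsto (fun n : ℕ => a + h n) atTop (𝓝[≠] a) := by
    intro a
    apply tendsto_nhdsWithin_of_tendsto_nhds_of_eventually_within
    · have : Tendsto h atTop (𝓝 0) := tendsto_one_div_add_atTop_nhds_zero_nat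
      simpa using (tendsto_const_nhds.add this)
    · filter_upwards with n
      simp only [Set.mem_compl_iff, Set.mem_singleton_iff]
      have := hhpos n; intro hcon; nlinarith [hcon ▸ (lt_irrefl a)]
  have key2 : ∀ a : ℝ, Tendsto (fun n : ℕ => ((n:ℝ)+1) * ∫ u in a..(a + h n), f u)
      atTop (𝓝 (f a)) := by
    intro a
    have hG : HasDerivAt (fun u => ∫ x in (0:ℝ)..u, f x) (f a) a :=
      intervalIntegral.integral_hasDerivAt_right (hint 0 a)
        (hfc.stronglyMeasurableAtFilter _ _) hfc.continuousAt
    rw [hasDerivAt_iff_tendsto_slope] at hG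
    have := hG.comp (hseq a)
    refine this.congr (fun n => ?_)
    have hadj : (∫ x in (0:ℝ)..a, f x) + ∫ x in a..(a + h n), f x
        = ∫ x in (0:ℝ)..(a + h n), f x :=
      intervalIntegral.integral_add_adjacent_intervals (hint 0 a) (hint a (a + h n))
    simp only [Function.comp_apply, slope_def_field]
    rw [show a + h n - a = h n by ring, ← hadj]
    rw [show (∫ x in (0:ℝ)..a, f x) + (∫ x in a..(a + h n), f x) - ∫ x in (0:ℝ)..a, f x
        = ∫ x in a..(a + h n), f x by ring]
    rw [div_eq_iff (ne_of_gt (hhpos n))]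
    rw [mul_right_comm, mul_comm ((n:ℝ)+1) (h n), hhmul n, one_mul]
  have key1 : ∀ n : ℕ, ∫ t in Set.Ioc 0 T, ((f (t + h n) - f t) * ((n:ℝ)+1))
      = (((n:ℝ)+1) * ∫ u in T..(T + h n), f u)
        - (((n:ℝ)+1) * ∫ u in (0:ℝ)..(0 + h n), f u) := by
    intro n
    have hint1 : IntervalIntegrable (fun t => f (t + h n)) volume 0 T :=
      (hfc.comp (continuous_id.add continuous_const)).intervalIntegrable 0 T
    have e0 : ∫ t in Set.Ioc 0 T, ((f (t + h n) - f t) * ((n:ℝ)+1))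
        = ∫ t in (0:ℝ)..T, ((f (t + h n) - f t) * ((n:ℝ)+1)) :=
      (intervalIntegral.integral_of_le hT0).symm
    have e1 : ∫ t in (0:ℝ)..T, ((f (t + h n) - f t) * ((n:ℝ)+1))
        = ((∫ t in (0:ℝ)..T, f (t + h n)) - ∫ t in (0:ℝ)..T, f t) * ((n:ℝ)+1) := by
      rw [intervalIntegral.integral_mul_const, intervalIntegral.integral_sub hint1 (hint 0 T)]
    have e2 : ∫ t in (0:ℝ)..T, f (t + h n) = ∫ u in (h n)..(T + h n), f u := by
      have := intervalIntegral.integral_comp_add_right (a := 0) (b := T) f (h n)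
      simpa using this
    have A1 : (∫ u in (0:ℝ)..(h n), f u) + ∫ u in (h n)..T, f u = ∫ u in (0:ℝ)..T, f u :=
      intervalIntegral.integral_add_adjacent_intervals (hint _ _) (hint _ _)
    have A2 : (∫ u in (h n)..T, f u) + ∫ u in T..(T + h n), f u
        = ∫ u in (h n)..(T + h n), f u :=
      intervalIntegral.integral_add_adjacent_intervals (hint _ _) (hint _ _)
    rw [e0, e1, e2, ← A2, ← A1, zero_add]
    ring
  have hdiffR : ∀ᵐ t ∂(volume.restrict (Set.Ioc 0 T)), DifferentiableAt ℝ f t :=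
    ae_restrict_of_ae (hf.ae_differentiableAt (μ := (volume : Measure ℝ)))
  have key3 : Tendsto (fun n : ℕ => ∫ t in Set.Ioc 0 T, ((f (t + h n) - f t) * ((n:ℝ)+1)))
      atTop (𝓝 (∫ t in Set.Ioc 0 T, deriv f t)) := by
    apply tendsto_integral_of_dominated_convergence (bound := fun _ => (L:ℝ))
    · intro n
      exact (((hfc.comp (continuous_id.add continuous_const)).sub hfc).mul
        continuous_const).aestronglyMeasurable
    · exact integrable_const _
    · intro n
      filter_upwards with t
      rw [Real.norm_eq_abs, abs_mul, abs_of_pos (by positivity : (0:ℝ) < (n:ℝ)+1)]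
      have hb : |f (t + h n) - f t| ≤ L * h n := by
        have := hf.dist_le_mul (t + h n) t
        rw [Real.dist_eq, Real.dist_eq] at this
        simpa [abs_of_pos (hhpos n)] using this
      calc |f (t + h n) - f t| * ((n:ℝ)+1) ≤ ((L:ℝ) * h n) * ((n:ℝ)+1) :=
            mul_le_mul_of_nonneg_right hb (by positivity)
        _ = L := by rw [mul_assoc, hhmul n, mul_one]
    · filter_upwards [hdiffR] with t hd
      have h1 := hd.hasDerivAt
      rw [hasDerivAt_iff_tendsto_slope] at h1
      refine (h1.comp (hseq t)).congr (fun n => ?_)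
      simp only [Function.comp_apply, slope_def_field]
      rw [show t + h n - t = h n by ring, div_eq_iff (ne_of_gt (hhpos n)),
        mul_assoc, mul_comm ((n:ℝ)+1) (h n), hhmul n, mul_one]
  have hlim1 : Tendsto (fun n : ℕ => ∫ t in Set.Ioc 0 T, ((f (t + h n) - f t) * ((n:ℝ)+1)))
      atTop (𝓝 (f T - f 0)) := by
    have := (key2 T).sub (key2 0)
    exact Tendsto.congr (fun n => (key1 n).symm) this
  have heq : f T - f 0 = ∫ t in Set.Ioc 0 T, deriv f t := tendsto_nhds_unique hlim1 key3
  have hder_int : Integrable (deriv f) (volume.restrict (Set.Ioc 0 T)) := by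
    refine (integrable_const ((L:ℝ))).mono' ((measurable_deriv f).aestronglyMeasurable) ?_
    filter_upwards with t
    rw [Real.norm_eq_abs]; exact abs_deriv_le_of_lip hf t
  have hCsub : ∀ᵐ t ∂(volume.restrict (Set.Ioc 0 T)), deriv f t ≤ C := by
    refine ae_restrict_of_ae_restrict_of_subset ?_ hC
    intro u hu; exact ⟨le_of_lt hu.1, le_trans hu.2 hT1⟩
  have hmono : ∫ t in Set.Ioc 0 T, deriv f t ≤ ∫ t in Set.Ioc 0 T, (C : ℝ) :=
    integral_mono_ae hder_int (integrable_const C) hCsub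
  have hconst : ∫ t in Set.Ioc 0 T, (C:ℝ) = C * T := by
    rw [setIntegral_const, Real.volume_real_Ioc_of_le hT0, smul_eq_mul, sub_zero]
    ring
  rw [hconst] at hmono
  linarith [heq ▸ hmono]

lemma lipschitzWith_wsum {n : ℕ} (g : ℕ → ℝ → ℝ) (hg : ∀ i, i < n → LipschitzWith 1 (g i))
    (w : ℕ → ℝ) :
    LipschitzWith (∑ i ∈ Finset.range n, ‖w i‖₊) (fun u => ∑ i ∈ Finset.range n, w i * g i u) := by
  rw [lipschitzWith_iff_dist_le_mul]
  intro u v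
  rw [Real.dist_eq]
  have hcoe : ((∑ i ∈ Finset.range n, ‖w i‖₊ : NNReal) : ℝ) = ∑ i ∈ Finset.range n, |w i| := by
    push_cast
    exact Finset.sum_congr rfl fun i _ => Real.norm_eq_abs (w i)
  rw [hcoe]
  calc |(∑ i ∈ Finset.range n, w i * g i u) - ∑ i ∈ Finset.range n, w i * g i v|
      = |∑ i ∈ Finset.range n, (w i * g i u - w i * g i v)| := by rw [Finset.sum_sub_distrib]
    _ ≤ ∑ i ∈ Finset.range n, |w i * g i u - w i * g i v| := Finset.abs_sum_le_sum_abs _ _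
    _ ≤ ∑ i ∈ Finset.range n, |w i| * dist u v := by
        apply Finset.sum_le_sum
        intro i hi
        rw [← mul_sub, abs_mul]
        apply mul_le_mul_of_nonneg_left _ (abs_nonneg _)
        have := (hg i (Finset.mem_range.mp hi)).dist_le_mul u v
        rw [Real.dist_eq] at this
        simpa using this
    _ = (∑ i ∈ Finset.range n, |w i|) * dist u v := by rw [Finset.sum_mul]

lemma xofN_coord {d : ℕ} (φ : C(I01, Fin (d+2) → ℝ)) (i : ℕ) (h : i < d+2) :
    (fun u => xofN φ u i) = (fun u => pext φ u ⟨i, h⟩) := by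
  funext u; simp only [xofN, toN, dif_pos h]

lemma vofN_eq_deriv {d : ℕ} (φ : C(I01, Fin (d+2) → ℝ)) (t : ℝ) (i : ℕ) :
    vofN φ t i = deriv (fun u => xofN φ u i) t := by
  by_cases h : i < d + 2
  · simp only [vofN, toN, dif_pos h, pderivC]
    rw [xofN_coord φ i h]
  · simp only [vofN, toN, dif_neg h]
    have : (fun u => xofN φ u i) = (fun _ : ℝ => (0:ℝ)) := by
      funext u; simp only [xofN, toN, dif_neg h]
    rw [this, deriv_const]

lemma compat_xofN {x : ∀ j : ℕ, C(I01, Fin (j+2) → ℝ)} (hx : x ∈ ProjLim)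
    {r s : ℕ} (hrs : r ≤ s) {i : ℕ} (hi : i ≤ r) (u : ℝ) :
    xofN (x r) u i = xofN (x s) u i := by
  have hp := hx r s hrs
  have hir : i < r + 2 := by omega
  have his : i < s + 2 := by omega
  have h1 : (x r) (Set.projIcc 0 1 zero_le_one u) ⟨i, hir⟩
      = truncMap r s hrs ((x s) (Set.projIcc 0 1 zero_le_one u)) ⟨i, hir⟩ := by
    rw [← hp]; rfl
  simp only [xofN, toN, dif_pos hir, dif_pos his, pext]
  rw [h1]
  simp only [truncMap]
  rw [if_pos (show ((⟨i, hir⟩ : Fin (r+2)) : ℕ) ≤ r from hi)]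
  rfl

lemma sum_split_aux {M : Type*} [AddCommMonoid M] (g : ℕ → M) {r s : ℕ} (h : r ≤ s) :
    ∑ i ∈ Finset.range (s+1), g i
      = ∑ i ∈ Finset.range (r+1), g i + ∑ i ∈ Finset.Ico (r+1) (s+1), g i := by
  rw [Finset.range_eq_Ico,
    ← Finset.sum_Ico_consecutive g (show 0 ≤ r+1 by omega) (show r+1 ≤ s+1 by omega),
    ← Finset.range_eq_Ico]

lemma gamma_wsum_bound {d : ℕ} {c : ℕ → ℝ} {φ : C(I01, Fin (d+2) → ℝ)} (hφ : φ ∈ Gamma d c)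
    (w : ℕ → ℝ)
    (hder : ∀ᵐ t ∂(volume.restrict (Set.Icc (0:ℝ) 1)),
        ∑ i ∈ Finset.range (d+1), w i * vofN φ t i ≤ 1)
    {T : ℝ} (hT0 : 0 ≤ T) (hT1 : T ≤ 1) :
    ∑ i ∈ Finset.range (d+1), w i * xofN φ T i
      ≤ (∑ i ∈ Finset.range (d+1), w i * c i) + 1 * T := by
  have hlipc : ∀ i, i < d + 1 → LipschitzWith 1 (fun u => xofN φ u i) := by
    intro i hi
    have h2 : i < d + 2 := by omega
    rw [xofN_coord φ i h2]
    exact hφ.2.2.1 ⟨i, h2⟩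
  have hlipf := lipschitzWith_wsum (fun i u => xofN φ u i) hlipc w
  have hderiv : ∀ᵐ t ∂(volume.restrict (Set.Icc (0:ℝ) 1)),
      deriv (fun u => ∑ i ∈ Finset.range (d+1), w i * xofN φ u i) t ≤ 1 := by
    have hrad : ∀ᵐ t ∂(volume : Measure ℝ), ∀ i : Fin (d+2),
        DifferentiableAt ℝ (fun u => pext φ u i) t :=
      ae_all_iff.2 fun i => (hφ.2.2.1 i).ae_differentiableAt (μ := (volume : Measure ℝ))
    filter_upwards [hder, ae_restrict_of_ae hrad] with t h1 h2
    have H : HasDerivAt (fun u => ∑ i ∈ Finset.range (d+1), w i * xofN φ u i)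
        (∑ i ∈ Finset.range (d+1), w i * vofN φ t i) t := by
      apply HasDerivAt.fun_sum
      intro i hi
      have hi2 : i < d + 2 := by
        have := Finset.mem_range.mp hi; omega
      have hco : HasDerivAt (fun u => xofN φ u i) (vofN φ t i) t := by
        rw [vofN_eq_deriv φ t i]
        have hdd : DifferentiableAt ℝ (fun u => xofN φ u i) t := by
          rw [xofN_coord φ i hi2]
          exact h2 ⟨i, hi2⟩
        exact hdd.hasDerivAt
      exact hco.const_mul (w i)
    rw [H.deriv]
    exact h1
  have hfin := lip_le_of_deriv_le hlipf hderiv hT0 hT1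
  have h00 : ∀ i ∈ Finset.range (d+1), w i * xofN φ 0 i = w i * c i := by
    intro i hi
    have hid : i ≤ d := by have := Finset.mem_range.mp hi; omega
    have hi2 : i < d + 2 := by omega
    have e1 : xofN φ 0 i = φ pt0 ⟨i, hi2⟩ := by
      simp only [xofN, toN, dif_pos hi2, pext]
      have hpt : Set.projIcc (0:ℝ) 1 zero_le_one 0 = pt0 := by
        apply Subtype.ext
        simp [Set.projIcc, pt0]
      exact congrArg (fun q => φ q ⟨i, hi2⟩) hpt
    rw [e1, hφ.1 ⟨i, hi2⟩]
    simp [cvec, hid]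
  rw [Finset.sum_congr rfl h00] at hfin
  exact hfin

/-- **Lemma (monotonicity of the truncated integrands).**  For `φ ∈ Γ*`, for almost every
`t ∈ [0,1]` and all `r < s`, `L_r(p_r(φ(t))) ≤ L_s(p_s(φ(t)))`. -/
theorem Ld_monotone
    (p β : ℝ → ℝ) (p0 β0 β1 : ℝ) (hND : ND p β p0 β0 β1)
    (c : ℕ → ℝ) (cc ctil : ℝ) (hLIM : LIMc c cc ctil) :
    ∀ x ∈ GammaStar c, ∀ᵐ t ∂(volume.restrict (Set.Icc (0:ℝ) 1)),
      ∀ r s : ℕ, r < s →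
        LdE p β cc ctil r t (xofN (x r) t) (vofN (x r) t)
          ≤ LdE p β cc ctil s t (xofN (x s) t) (vofN (x s) t) := by
  intro x hx
  obtain ⟨hproj, hgam⟩ := hx
  have hccnn : 0 ≤ cc := by
    rw [hLIM.cc_eq]; exact tsum_nonneg hLIM.nonneg
  have hctnn : 0 ≤ ctil := by
    rw [hLIM.ctil_eq]
    exact tsum_nonneg fun i => mul_nonneg (Nat.cast_nonneg i) (hLIM.nonneg i)
  -- mass bound
  have hmass : ∀ d : ℕ, ∀ T : ℝ, 0 ≤ T → T ≤ 1 →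
      ∑ i ∈ Finset.range (d+1), xofN (x d) T i ≤ cc + T := by
    intro d T hT0 hT1
    have hder : ∀ᵐ t ∂(volume.restrict (Set.Icc (0:ℝ) 1)),
        ∑ i ∈ Finset.range (d+1), (1:ℝ) * vofN (x d) t i ≤ 1 := by
      filter_upwards [(hgam d).2.2.2] with t ht
      simp only [one_mul]
      exact (ht.1 d le_rfl).2
    have hb := gamma_wsum_bound (hgam d) (fun _ => (1:ℝ)) hder hT0 hT1
    simp only [one_mul] at hb
    have hc : ∑ i ∈ Finset.range (d+1), c i ≤ cc := by
      rw [hLIM.cc_eq]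
      exact Summable.sum_le_tsum _ (fun i _ => hLIM.nonneg i) hLIM.summable
    linarith
  -- weight bound
  have hwt : ∀ d : ℕ, ∀ T : ℝ, 0 ≤ T → T ≤ 1 →
      ∑ i ∈ Finset.range (d+1), (i:ℝ) * xofN (x d) T i ≤ ctil + T := by
    intro d T hT0 hT1
    have hder : ∀ᵐ t ∂(volume.restrict (Set.Icc (0:ℝ) 1)),
        ∑ i ∈ Finset.range (d+1), (i:ℝ) * vofN (x d) t i ≤ 1 := by
      filter_upwards [(hgam d).2.2.2] with t ht
      obtain ⟨h1, h2, h3, h4⟩ := ht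
      have hv1 : ∑ l ∈ Finset.range (d+1), vofN (x d) t l ≤ 1 := (h1 d le_rfl).2
      have hvlast : 0 ≤ vofN (x d) t (d+1) := by
        rw [Finset.sum_range_succ] at h2; linarith
      have h3' : ∑ i ∈ Finset.range (d+2), (i:ℝ) * vofN (x d) t i ≤ 1 := h3 ▸ h4
      rw [Finset.sum_range_succ] at h3'
      have hpos : 0 ≤ ((d:ℝ)+1) * vofN (x d) t (d+1) :=
        mul_nonneg (by positivity) hvlast
      push_cast at h3'
      linarith
    have hb := gamma_wsum_bound (hgam d) (fun i : ℕ => (i:ℝ)) hder hT0 hT1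
    have hc : ∑ i ∈ Finset.range (d+1), (i:ℝ) * c i ≤ ctil := by
      rw [hLIM.ctil_eq]
      exact Summable.sum_le_tsum _
        (fun i _ => mul_nonneg (Nat.cast_nonneg i) (hLIM.nonneg i)) hLIM.mul_summable
    beta_reduce at hb
    linarith
  have hzero : ∀ᵐ t ∂(volume.restrict (Set.Icc (0:ℝ) 1)), t ≠ 0 := by
    have h1 : (volume.restrict (Set.Icc (0:ℝ) 1)) {(0:ℝ)} = 0 := by
      rw [Measure.restrict_apply (measurableSet_singleton 0)]
      exact measure_mono_null Set.inter_subset_left Real.volume_singleton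
    rw [ae_iff]
    have h2 : {a : ℝ | ¬ a ≠ 0} = {(0:ℝ)} := by ext u; simp
    rw [h2]; exact h1
  have hcond : ∀ᵐ t ∂(volume.restrict (Set.Icc (0:ℝ) 1)), ∀ d : ℕ,
      ((∀ i ≤ d, 0 ≤ ∑ l ∈ Finset.range (i+1), vofN (x d) t l
          ∧ ∑ l ∈ Finset.range (i+1), vofN (x d) t l ≤ 1)
        ∧ (∑ i ∈ Finset.range (d+2), vofN (x d) t i = 1)
        ∧ (∑ i ∈ Finset.range (d+2), (i : ℝ) * vofN (x d) t i
            = ∑ i ∈ Finset.range (d+1), numA (vofN (x d) t) i)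
        ∧ ∑ i ∈ Finset.range (d+1), numA (vofN (x d) t) i ≤ 1) :=
    ae_all_iff.2 fun d => (hgam d).2.2.2
  filter_upwards [ae_restrict_mem measurableSet_Icc, hzero, hcond] with t htI htne hC
  intro r s hrs
  have hrs' : r ≤ s := hrs.le
  obtain ⟨hCs1, hCs2, hCs3, hCs4⟩ := hC s
  have hβt : 0 < β t := lt_of_lt_of_le hND.β0_pos (hND.β_lb t htI)
  have hpt0 : 0 ≤ p t := hND.p_nonneg t htI
  have hpt1 : p t ≤ p0 := hND.p_le t htI
  have h1p : 0 ≤ 1 - p t := by linarith [hND.p0_lt_one]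
  have htpos : 0 < t := lt_of_le_of_ne htI.1 (Ne.symm htne)
  have hσ : 0 < sigf β cc ctil t := by
    simp only [sigf]; nlinarith
  -- compatibility
  have hX : ∀ i, i ≤ r → ∀ u : ℝ, xofN (x r) u i = xofN (x s) u i :=
    fun i hi u => compat_xofN hproj hrs' hi u
  have hV : ∀ i, i ≤ r → vofN (x r) t i = vofN (x s) t i := by
    intro i hi
    rw [vofN_eq_deriv, vofN_eq_deriv]
    congr 1
    funext u
    exact hX i hi u
  have hnumA : ∀ i, i ≤ r → numA (vofN (x r) t) i = numA (vofN (x s) t) i := by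
    intro i hi
    simp only [numA]
    congr 1
    refine Finset.sum_congr rfl fun l hl => ?_
    exact hV l (by have := Finset.mem_range.mp hl; omega)
  have hdenB : ∀ i, i ≤ r →
      denB p β cc ctil t (xofN (x r) t) i = denB p β cc ctil t (xofN (x s) t) i := by
    intro i hi
    simp only [denB]
    by_cases h0 : i = 0
    · subst h0
      rw [if_pos rfl, if_pos rfl, hX 0 (Nat.zero_le r) t]
    · rw [if_neg h0, if_neg h0, hX i hi t]
  -- nonnegativity facts at dimension s
  have hxs_nn : ∀ i, 0 ≤ xofN (x s) t i := by
    intro i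
    simp only [xofN, toN]
    split
    · exact (hgam s).2.1 _ _
    · exact le_refl 0
  have hnumA_nn : ∀ i, i ≤ s → 0 ≤ numA (vofN (x s) t) i := by
    intro i hi; simp only [numA]; linarith [(hCs1 i hi).2]
  have hlast_nn : 0 ≤ numALast (vofN (x s) t) s := by
    simp only [numALast]; linarith [hCs4]
  have hdenB_nn : ∀ i : ℕ, i ≠ 0 → 0 ≤ denB p β cc ctil t (xofN (x s) t) i := by
    intro i hi
    simp only [denB, if_neg hi]
    apply mul_nonneg h1p
    apply div_nonneg _ hσ.le
    exact mul_nonneg (add_nonneg (Nat.cast_nonneg i) hβt.le) (hxs_nn i)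
  -- the weight bound at time t
  have hW : ∑ i ∈ Finset.range (s+1), ((i:ℝ) + β t) * xofN (x s) t i
      ≤ sigf β cc ctil t := by
    have e : ∑ i ∈ Finset.range (s+1), ((i:ℝ) + β t) * xofN (x s) t i
        = (∑ i ∈ Finset.range (s+1), (i:ℝ) * xofN (x s) t i)
          + β t * ∑ i ∈ Finset.range (s+1), xofN (x s) t i := by
      rw [Finset.mul_sum, ← Finset.sum_add_distrib]
      exact Finset.sum_congr rfl fun i _ => by ring
    rw [e]
    have h2 := mul_le_mul_of_nonneg_left (hmass s t htI.1 htI.2) hβt.le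
    have h1 := hwt s t htI.1 htI.2
    simp only [sigf]
    nlinarith
  have hdlast_nn : 0 ≤ denBLast p β cc ctil t (xofN (x s) t) s := by
    simp only [denBLast]
    apply mul_nonneg h1p
    rw [sub_nonneg, div_le_one hσ]
    exact hW
  -- decomposition identities
  have E4 : numALast (vofN (x r) t) r
      = (∑ i ∈ Finset.Ico (r+1) (s+1), numA (vofN (x s) t) i)
        + numALast (vofN (x s) t) s := by
    simp only [numALast]
    have h1 : ∑ i ∈ Finset.range (r+1), numA (vofN (x r) t) i
        = ∑ i ∈ Finset.range (r+1), numA (vofN (x s) t) i :=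
      Finset.sum_congr rfl fun i hi =>
        hnumA i (by have := Finset.mem_range.mp hi; omega)
    rw [h1, sum_split_aux (fun i => numA (vofN (x s) t) i) hrs']
    ring
  have E5 : denBLast p β cc ctil t (xofN (x r) t) r
      = (∑ i ∈ Finset.Ico (r+1) (s+1), denB p β cc ctil t (xofN (x s) t) i)
        + denBLast p β cc ctil t (xofN (x s) t) s := by
    have hIco : ∑ i ∈ Finset.Ico (r+1) (s+1), denB p β cc ctil t (xofN (x s) t) i
        = (1 - p t) * ((∑ i ∈ Finset.Ico (r+1) (s+1), ((i:ℝ) + β t) * xofN (x s) t i)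
            / sigf β cc ctil t) := by
      rw [mul_div_assoc'] -- (1-p) * S / σ
      rw [Finset.mul_sum, Finset.sum_div]
      refine Finset.sum_congr rfl fun i hi => ?_
      have hne : i ≠ 0 := by have := (Finset.mem_Ico.mp hi).1; omega
      simp only [denB, if_neg hne]
      ring
    have hxeq : ∑ i ∈ Finset.range (r+1), ((i:ℝ) + β t) * xofN (x r) t i
        = ∑ i ∈ Finset.range (r+1), ((i:ℝ) + β t) * xofN (x s) t i :=
      Finset.sum_congr rfl fun i hi => by
        rw [hX i (by have := Finset.mem_range.mp hi; omega) t]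
    have hsp := sum_split_aux (fun i => ((i:ℝ) + β t) * xofN (x s) t i) hrs'
    simp only [denBLast]
    rw [hIco, hxeq]
    rw [hsp]
    field_simp
    ring
  -- assemble
  simp only [LdE]
  have hterm : ∑ i ∈ Finset.range (r+1),
      entTerm (numA (vofN (x r) t) i) (denB p β cc ctil t (xofN (x r) t) i)
      = ∑ i ∈ Finset.range (r+1),
        entTerm (numA (vofN (x s) t) i) (denB p β cc ctil t (xofN (x s) t) i) :=
    Finset.sum_congr rfl fun i hi => by
      have hir : i ≤ r := by have := Finset.mem_range.mp hi; omega
      rw [hnumA i hir, hdenB i hir]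
  rw [hterm,
    sum_split_aux (fun i => entTerm (numA (vofN (x s) t) i)
      (denB p β cc ctil t (xofN (x s) t) i)) hrs',
    add_assoc]
  refine add_le_add_right ?_ _
  rw [E4, E5]
  refine le_trans (entTerm_add_le
    (Finset.sum_nonneg fun i hi =>
      hnumA_nn i (by have := (Finset.mem_Ico.mp hi).2; omega))
    hlast_nn
    (Finset.sum_nonneg fun i hi =>
      hdenB_nn i (by have := (Finset.mem_Ico.mp hi).1; omega))
    hdlast_nn) ?_
  refine add_le_add_left (entTerm_sum_le _ _ _
    (fun i hi => hnumA_nn i (by have := (Finset.mem_Ico.mp hi).2; omega))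
    (fun i hi => hdenB_nn i (by have := (Finset.mem_Ico.mp hi).1; omega))) _

end
end
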